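/- arXiv:0901.3356 — 2 statements merged into one kernel-verified Lean document; each statement's English description precedes it below -/
import Mathlib

section
/- For every measurable 2-coloring of the unit interval [0,1] there exists a monochromatic symmetric subset of Lebesgue measure at least 1/(4 + √6). -/
open MeasureTheory Function
open scoped ENNReal

noncomputable def cor (g h : ℝ → ℝ≥0∞) (d : ℝ) : ℝ≥0∞ := ∫⁻ t, g t * h (t + d)
noncomputable def cnv (g h : ℝ → ℝ≥0∞) (s : ℝ) : ℝ≥0∞ := ∫⁻ t, g t * h (s - t)

lemma meas_cor {g h : ℝ → ℝ≥0∞} (hg : Measurable g) (hh : Measurable h) :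
    Measurable (cor g h) :=
  Measurable.lintegral_prod_right ((hg.comp measurable_snd).mul
    (hh.comp (measurable_snd.add measurable_fst)))

lemma meas_cnv {g h : ℝ → ℝ≥0∞} (hg : Measurable g) (hh : Measurable h) :
    Measurable (cnv g h) :=
  Measurable.lintegral_prod_right ((hg.comp measurable_snd).mul
    (hh.comp (measurable_fst.sub measurable_snd)))

lemma lint_neg (f : ℝ → ℝ≥0∞) : (∫⁻ x, f (-x)) = ∫⁻ x, f x :=
  (Measure.measurePreserving_neg (volume : Measure ℝ)).lintegral_comp_emb
    (MeasurableEquiv.neg ℝ).measurableEmbedding f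

lemma lint_shift (f : ℝ → ℝ≥0∞) (a : ℝ) : (∫⁻ x, f (x + a)) = ∫⁻ x, f x :=
  lintegral_add_right_eq_self f a

lemma lint_sub (f : ℝ → ℝ≥0∞) (a : ℝ) : (∫⁻ x, f (a - x)) = ∫⁻ x, f x := by
  have h1 : (∫⁻ x, f (a - x)) = ∫⁻ x, f (a - -x) := (lint_neg (fun x => f (a - x))).symm
  rw [h1]
  simp_rw [sub_neg_eq_add, add_comm a]
  exact lint_shift f a

lemma EX (F G : ℝ → ℝ → ℝ≥0∞) (hF : Measurable (uncurry F)) (hG : Measurable (uncurry G)) :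
    (∫⁻ s, (∫⁻ x, F x s) * (∫⁻ y, G y s)) = ∫⁻ x, ∫⁻ y, ∫⁻ s, F x s * G y s := by
  have CG : Measurable fun s => ∫⁻ y, G y s :=
    Measurable.lintegral_prod_right (hG.comp measurable_swap)
  have mFs : ∀ s : ℝ, Measurable fun x => F x s := fun s =>
    hF.comp (measurable_id.prodMk measurable_const)
  have mFx : ∀ x : ℝ, Measurable fun s => F x s := fun x =>
    hF.comp (measurable_const.prodMk measurable_id)
  calc (∫⁻ s, (∫⁻ x, F x s) * (∫⁻ y, G y s))
      = ∫⁻ s, ∫⁻ x, F x s * (∫⁻ y, G y s) := by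
        refine lintegral_congr fun s => ?_
        exact (lintegral_mul_const'' _ (mFs s).aemeasurable).symm
    _ = ∫⁻ x, ∫⁻ s, F x s * (∫⁻ y, G y s) := by
        apply lintegral_lintegral_swap
        exact ((hF.comp measurable_swap).mul (CG.comp measurable_fst)).aemeasurable
    _ = ∫⁻ x, ∫⁻ y, ∫⁻ s, F x s * G y s := by
        refine lintegral_congr fun x => ?_
        calc (∫⁻ s, F x s * (∫⁻ y, G y s))
            = ∫⁻ s, ∫⁻ y, F x s * G y s := by
              refine lintegral_congr fun s => ?_
              have : Measurable fun y => G y s := hG.comp (measurable_id.prodMk measurable_const)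
              exact (lintegral_const_mul'' _ this.aemeasurable).symm
          _ = ∫⁻ y, ∫⁻ s, F x s * G y s := by
              apply lintegral_lintegral_swap
              exact (((mFx x).comp measurable_fst).mul
                (hG.comp (measurable_snd.prodMk measurable_fst))).aemeasurable

lemma L3 {g1 g2 h1 h2 : ℝ → ℝ≥0∞} (m1 : Measurable g1) (m2 : Measurable g2)
    (m3 : Measurable h1) (m4 : Measurable h2) :
    (∫⁻ s, cnv g1 g2 s * cnv h1 h2 s) = ∫⁻ d, cor h1 g1 d * cor g2 h2 d := by
  have hK : Measurable (cor g2 h2) := meas_cor m2 m4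
  have step1 : (∫⁻ s, cnv g1 g2 s * cnv h1 h2 s)
      = ∫⁻ x, ∫⁻ y, ∫⁻ s, (g1 x * g2 (s - x)) * (h1 y * h2 (s - y)) := by
    apply EX
    · exact (m1.comp measurable_fst).mul (m2.comp (measurable_snd.sub measurable_fst))
    · exact (m3.comp measurable_fst).mul (m4.comp (measurable_snd.sub measurable_fst))
  have step2 : ∀ x y : ℝ, (∫⁻ s, (g1 x * g2 (s - x)) * (h1 y * h2 (s - y)))
      = (g1 x * h1 y) * cor g2 h2 (x - y) := by
    intro x y
    have e1 : (∫⁻ s, (g1 x * g2 (s - x)) * (h1 y * h2 (s - y)))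
        = ∫⁻ s, (g1 x * h1 y) * (g2 (s - x) * h2 (s - y)) := by
      refine lintegral_congr fun s => by ring
    rw [e1]
    have m5 : Measurable fun s => g2 (s - x) * h2 (s - y) :=
      (m2.comp (measurable_id.sub measurable_const)).mul
        (m4.comp (measurable_id.sub measurable_const))
    rw [lintegral_const_mul'' _ m5.aemeasurable]
    congr 1
    have := lint_shift (fun s => g2 (s - x) * h2 (s - y)) x
    rw [← this]
    unfold cor
    refine lintegral_congr fun t => ?_
    have e2 : t + x - x = t := by ring
    have e3 : t + x - y = t + (x - y) := by ring
    rw [e2, e3]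
  rw [step1]
  have step3 : (∫⁻ x, ∫⁻ y, ∫⁻ s, (g1 x * g2 (s - x)) * (h1 y * h2 (s - y)))
      = ∫⁻ x, ∫⁻ y, (g1 x * h1 y) * cor g2 h2 (x - y) := by
    refine lintegral_congr fun x => lintegral_congr fun y => step2 x y
  rw [step3]
  have step4 : (∫⁻ x, ∫⁻ y, (g1 x * h1 y) * cor g2 h2 (x - y))
      = ∫⁻ y, ∫⁻ x, (g1 x * h1 y) * cor g2 h2 (x - y) := by
    apply lintegral_lintegral_swap
    exact (((m1.comp measurable_fst).mul (m3.comp measurable_snd)).mul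
      (hK.comp (measurable_fst.sub measurable_snd))).aemeasurable
  rw [step4]
  have step5 : ∀ y : ℝ, (∫⁻ x, (g1 x * h1 y) * cor g2 h2 (x - y))
      = ∫⁻ d, (h1 y * g1 (y + d)) * cor g2 h2 d := by
    intro y
    have := lint_shift (fun x => (g1 x * h1 y) * cor g2 h2 (x - y)) y
    rw [← this]
    refine lintegral_congr fun d => ?_
    have e2 : d + y - y = d := by ring
    rw [e2]
    ring_nf
  rw [lintegral_congr step5]
  have step6 : (∫⁻ y, ∫⁻ d, (h1 y * g1 (y + d)) * cor g2 h2 d)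
      = ∫⁻ d, ∫⁻ y, (h1 y * g1 (y + d)) * cor g2 h2 d := by
    apply lintegral_lintegral_swap
    exact (((m3.comp measurable_fst).mul (m1.comp (measurable_fst.add measurable_snd))).mul
      (hK.comp measurable_snd)).aemeasurable
  rw [step6]
  refine lintegral_congr fun d => ?_
  unfold cor
  exact lintegral_mul_const'' _ ((m3.mul (m1.comp (measurable_id.add measurable_const)))).aemeasurable

lemma L4 {g h : ℝ → ℝ≥0∞} (mg : Measurable g) (mh : Measurable h) :
    (∫⁻ d, cor g h d * cor g h d) = ∫⁻ d, cor g g d * cor h h d := by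
  have hK : Measurable (cor h h) := meas_cor mh mh
  have step1 : (∫⁻ d, cor g h d * cor g h d)
      = ∫⁻ t, ∫⁻ u, ∫⁻ d, (g t * h (t + d)) * (g u * h (u + d)) := by
    apply EX
    · exact (mg.comp measurable_fst).mul (mh.comp (measurable_fst.add measurable_snd))
    · exact (mg.comp measurable_fst).mul (mh.comp (measurable_fst.add measurable_snd))
  rw [step1]
  have step2 : ∀ t u : ℝ, (∫⁻ d, (g t * h (t + d)) * (g u * h (u + d)))
      = (g t * g u) * cor h h (u - t) := by
    intro t u
    have e1 : (∫⁻ d, (g t * h (t + d)) * (g u * h (u + d)))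
        = ∫⁻ d, (g t * g u) * (h (t + d) * h (u + d)) :=
      lintegral_congr fun d => by ring
    rw [e1]
    have m5 : Measurable fun d => h (t + d) * h (u + d) :=
      (mh.comp (measurable_const.add measurable_id)).mul
        (mh.comp (measurable_const.add measurable_id))
    rw [lintegral_const_mul'' _ m5.aemeasurable]
    congr 1
    have := lint_shift (fun d => h (t + d) * h (u + d)) (-t)
    rw [← this]
    unfold cor
    refine lintegral_congr fun e => ?_
    have e2 : t + (e + -t) = e := by ring
    have e3 : u + (e + -t) = e + (u - t) := by ring
    rw [e2, e3]
  rw [lintegral_congr fun t => lintegral_congr fun u => step2 t u]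
  have step3 : ∀ t : ℝ, (∫⁻ u, (g t * g u) * cor h h (u - t))
      = ∫⁻ e, (g t * g (t + e)) * cor h h e := by
    intro t
    have := lint_shift (fun u => (g t * g u) * cor h h (u - t)) t
    rw [← this]
    refine lintegral_congr fun e => ?_
    have e2 : e + t - t = e := by ring
    rw [e2]
    ring_nf
  rw [lintegral_congr step3]
  have step4 : (∫⁻ t, ∫⁻ e, (g t * g (t + e)) * cor h h e)
      = ∫⁻ e, ∫⁻ t, (g t * g (t + e)) * cor h h e := by
    apply lintegral_lintegral_swap
    exact (((mg.comp measurable_fst).mul (mg.comp (measurable_fst.add measurable_snd))).mul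
      (hK.comp measurable_snd)).aemeasurable
  rw [step4]
  refine lintegral_congr fun e => ?_
  unfold cor
  exact lintegral_mul_const'' _ ((mg.mul (mg.comp (measurable_id.add measurable_const)))).aemeasurable

lemma CS {u v : ℝ → ℝ≥0∞} (hu : Measurable u) (hv : Measurable v) :
    (∫⁻ a, u a * v a) ≤ (∫⁻ a, u a * u a) ^ (1/2 : ℝ) * (∫⁻ a, v a * v a) ^ (1/2 : ℝ) := by
  have hpq : Real.HolderConjugate 2 2 := Real.HolderConjugate.two_two
  have := ENNReal.lintegral_mul_le_Lp_mul_Lq volume hpq hu.aemeasurable hv.aemeasurable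
  simp only [Pi.mul_apply] at this
  calc (∫⁻ a, u a * v a) ≤ (∫⁻ a, u a ^ (2:ℝ)) ^ (1/2 : ℝ) * (∫⁻ a, v a ^ (2:ℝ)) ^ (1/2 : ℝ) := this
    _ = (∫⁻ a, u a * u a) ^ (1/2 : ℝ) * (∫⁻ a, v a * v a) ^ (1/2 : ℝ) := by
        congr 1 <;> · congr 1; refine lintegral_congr fun a => ?_
                      rw [show (2:ℝ) = ((2:ℕ):ℝ) by norm_num, ENNReal.rpow_natCast, sq]

noncomputable def tentf (s : ℝ) : ℝ := min s 1 - max (s - 1) 0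

lemma tentf_cont : Continuous tentf :=
  (continuous_id.min continuous_const).sub ((continuous_id.sub continuous_const).max continuous_const)

lemma tent_le_cnv (s : ℝ) :
    ENNReal.ofReal (tentf s) ≤ cnv ((Set.Icc (0:ℝ) 1).indicator 1) ((Set.Icc (0:ℝ) 1).indicator 1) s := by
  set i := (Set.Icc (0:ℝ) 1).indicator (1 : ℝ → ℝ≥0∞) with hi
  have key : ∀ t : ℝ, (Set.Icc (max (s-1) 0) (min s 1)).indicator (1 : ℝ → ℝ≥0∞) t
      ≤ i t * i (s - t) := by
    intro t
    by_cases ht : t ∈ Set.Icc (max (s-1) 0) (min s 1)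
    · have hmem := ht
      obtain ⟨h1, h2⟩ := hmem
      have ht1 : t ∈ Set.Icc (0:ℝ) 1 :=
        ⟨le_trans (le_max_right _ _) h1, le_trans h2 (min_le_right _ _)⟩
      have ht2 : s - t ∈ Set.Icc (0:ℝ) 1 := by
        constructor
        · have : t ≤ s := le_trans h2 (min_le_left _ _)
          linarith
        · have : s - 1 ≤ t := le_trans (le_max_left _ _) h1
          linarith
      rw [Set.indicator_of_mem ht, hi, Set.indicator_of_mem ht1, Set.indicator_of_mem ht2]
      simp
    · rw [Set.indicator_of_notMem ht]
      exact zero_le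
  calc ENNReal.ofReal (tentf s)
      = volume (Set.Icc (max (s-1) 0) (min s 1)) := by rw [Real.volume_Icc]; rfl
    _ = ∫⁻ t, (Set.Icc (max (s-1) 0) (min s 1)).indicator (1 : ℝ → ℝ≥0∞) t := by
        rw [lintegral_indicator measurableSet_Icc]; simp
    _ ≤ ∫⁻ t, i t * i (s - t) := lintegral_mono key
    _ = cnv i i s := rfl

lemma tent_int : (2/3 : ℝ) ≤ ∫ s in Set.Icc (0:ℝ) 2, tentf s ^ 2 := by
  have hcont : Continuous fun s => tentf s ^ 2 := tentf_cont.pow 2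
  rw [integral_Icc_eq_integral_Ioc, ← intervalIntegral.integral_of_le (by norm_num : (0:ℝ) ≤ 2)]
  have hi1 : IntervalIntegrable (fun s => tentf s ^ 2) volume 0 1 := hcont.intervalIntegrable _ _
  have hi2 : IntervalIntegrable (fun s => tentf s ^ 2) volume 1 2 := hcont.intervalIntegrable _ _
  rw [← intervalIntegral.integral_add_adjacent_intervals hi1 hi2]
  have e1 : (∫ s in (0:ℝ)..1, tentf s ^ 2) = ∫ s in (0:ℝ)..1, s ^ 2 := by
    apply intervalIntegral.integral_congr
    intro s hs
    rw [Set.uIcc_of_le (by norm_num : (0:ℝ) ≤ 1)] at hs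
    obtain ⟨hs0, hs1⟩ := hs
    show tentf s ^ 2 = s ^ 2
    unfold tentf
    rw [min_eq_left hs1, max_eq_right (by linarith)]
    ring
  have e2 : (∫ s in (1:ℝ)..2, tentf s ^ 2) = ∫ s in (1:ℝ)..2, (2 - s) ^ 2 := by
    apply intervalIntegral.integral_congr
    intro s hs
    rw [Set.uIcc_of_le (by norm_num : (1:ℝ) ≤ 2)] at hs
    obtain ⟨hs0, hs1⟩ := hs
    show tentf s ^ 2 = (2 - s) ^ 2
    unfold tentf
    rw [min_eq_right hs0, max_eq_left (by linarith)]
    ring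
  have e3 : (∫ s in (1:ℝ)..2, (2 - s) ^ 2) = ∫ x in (0:ℝ)..1, x ^ 2 := by
    have := intervalIntegral.integral_comp_sub_left (a := (1:ℝ)) (b := 2) (fun x => x ^ 2) 2
    rw [this]; norm_num
  rw [e1, e2, e3, integral_pow]
  norm_num

lemma tentf_nonneg {s : ℝ} (h0 : 0 ≤ s) (h2 : s ≤ 2) : 0 ≤ tentf s := by
  unfold tentf
  rcases le_total s 1 with h | h
  · rw [min_eq_left h, max_eq_right (by linarith)]; linarith
  · rw [min_eq_right h, max_eq_left (by linarith)]; linarith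

lemma EI_lb :
    ENNReal.ofReal (2/3) ≤ ∫⁻ s, cnv ((Set.Icc (0:ℝ) 1).indicator 1) ((Set.Icc (0:ℝ) 1).indicator 1) s
      * cnv ((Set.Icc (0:ℝ) 1).indicator 1) ((Set.Icc (0:ℝ) 1).indicator 1) s := by
  set i := (Set.Icc (0:ℝ) 1).indicator (1 : ℝ → ℝ≥0∞) with hidef
  have hcont : Continuous fun s => tentf s ^ 2 := tentf_cont.pow 2
  calc ENNReal.ofReal (2/3)
      ≤ ENNReal.ofReal (∫ s in Set.Icc (0:ℝ) 2, tentf s ^ 2) := ENNReal.ofReal_le_ofReal tent_int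
    _ = ∫⁻ s in Set.Icc (0:ℝ) 2, ENNReal.ofReal (tentf s ^ 2) :=
        ofReal_integral_eq_lintegral_ofReal (hcont.integrableOn_Icc)
          (Filter.Eventually.of_forall fun s => sq_nonneg _)
    _ = ∫⁻ s in Set.Icc (0:ℝ) 2, ENNReal.ofReal (tentf s) * ENNReal.ofReal (tentf s) := by
        apply setLIntegral_congr_fun measurableSet_Icc
        intro s hs; dsimp only
        rw [← ENNReal.ofReal_mul (tentf_nonneg hs.1 hs.2), sq]
    _ ≤ ∫⁻ s in Set.Icc (0:ℝ) 2, cnv i i s * cnv i i s := by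
        apply setLIntegral_mono' measurableSet_Icc
        intro s _
        exact mul_le_mul' (tent_le_cnv s) (tent_le_cnv s)
    _ ≤ ∫⁻ s, cnv i i s * cnv i i s := setLIntegral_le_lintegral _ _

lemma sqrt6_gt_two : (2:ℝ) < Real.sqrt 6 := by
  nlinarith [Real.sq_sqrt (show (0:ℝ) ≤ 6 by norm_num), Real.sqrt_nonneg 6]

lemma numeric (p q : ℝ) (hp : 0 ≤ p) (hq : 0 ≤ q)
    (h : p^2 + q^2 = Real.sqrt (1/(4+Real.sqrt 6))) :
    p^4 + q^4 + 6*(p^2*q^2) + 4*(p^3*q) + 4*(p*q^3) < 2/3 := by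
  have h6 := sqrt6_gt_two
  have hT : (0:ℝ) < 1/(4+Real.sqrt 6) := by positivity
  have hs : Real.sqrt (1/(4+Real.sqrt 6)) ^ 2 = 1/(4+Real.sqrt 6) := Real.sq_sqrt hT.le
  have key : p^4 + q^4 + 6*(p^2*q^2) + 4*(p^3*q) + 4*(p*q^3) = (p+q)^4 := by ring
  rw [key]
  have e1 : (p+q)^2 ≤ 2*(p^2+q^2) := by nlinarith [sq_nonneg (p-q)]
  have e2 : (p+q)^4 ≤ (2*(p^2+q^2))^2 := by
    have h1 : (0:ℝ) ≤ (p+q)^2 := sq_nonneg _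
    calc (p+q)^4 = ((p+q)^2)^2 := by ring
      _ ≤ (2*(p^2+q^2))^2 := by nlinarith
  have e3 : (2*(p^2+q^2))^2 = 4 * (1/(4+Real.sqrt 6)) := by
    rw [h]; rw [mul_pow, hs]; norm_num
  have e4 : 4 * (1/(4+Real.sqrt 6)) < 2/3 := by
    rw [mul_one_div, div_lt_div_iff₀ (by linarith) (by norm_num : (0:ℝ) < 3)]
    linarith
  calc (p+q)^4 ≤ (2*(p^2+q^2))^2 := e2
    _ = 4 * (1/(4+Real.sqrt 6)) := e3
    _ < 2/3 := e4

lemma lint_cnv {g h : ℝ → ℝ≥0∞} (mg : Measurable g) (mh : Measurable h) :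
    (∫⁻ s, cnv g h s) = (∫⁻ t, g t) * (∫⁻ t, h t) := by
  unfold cnv
  rw [lintegral_lintegral_swap
    ((mg.comp measurable_snd).mul (mh.comp (measurable_fst.sub measurable_snd))).aemeasurable]
  calc (∫⁻ t, ∫⁻ s, g t * h (s - t))
      = ∫⁻ t, g t * ∫⁻ s, h (s - t) := by
        refine lintegral_congr fun t => ?_
        exact lintegral_const_mul'' _ ((mh.comp (measurable_id.sub measurable_const)).aemeasurable)
    _ = ∫⁻ t, g t * ∫⁻ s, h s := by
        refine lintegral_congr fun t => ?_
        congr 1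
        have := lint_shift h (-t)
        simp only [← sub_eq_add_neg] at this
        exact this
    _ = (∫⁻ t, g t) * ∫⁻ s, h s := lintegral_mul_const'' _ mg.aemeasurable

lemma cnv_comm {g h : ℝ → ℝ≥0∞} (s : ℝ) : cnv g h s = cnv h g s := by
  unfold cnv
  rw [← lint_sub (fun t => g t * h (s - t)) s]
  refine lintegral_congr fun t => ?_
  have e : s - (s - t) = t := by ring
  rw [e, mul_comm]

lemma cnv_ind_eq_vol (S : Set ℝ) (hS : MeasurableSet S) (s : ℝ) :
    cnv (S.indicator 1) (S.indicator 1) s = volume (S ∩ (fun a => s - a) ⁻¹' S) := by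
  have hmeas : MeasurableSet (S ∩ (fun a : ℝ => s - a) ⁻¹' S) :=
    hS.inter (hS.preimage (measurable_const.sub measurable_id))
  have key : ∀ t : ℝ, S.indicator (1 : ℝ → ℝ≥0∞) t * S.indicator 1 (s - t)
      = (S ∩ (fun a => s - a) ⁻¹' S).indicator (1 : ℝ → ℝ≥0∞) t := by
    intro t
    by_cases h1 : t ∈ S <;> by_cases h2 : s - t ∈ S <;>
      simp [Set.indicator_apply, Set.mem_inter_iff, Set.mem_preimage, h1, h2]
  unfold cnv
  rw [lintegral_congr key, lintegral_indicator hmeas]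
  simp

set_option maxHeartbeats 2000000 in
lemma core (B : Set ℝ) (hB : MeasurableSet B) (hBsub : B ⊆ Set.Icc 0 1)
    (hPb : ∀ s : ℝ, volume (B ∩ (fun a => s - a) ⁻¹' B) ≤ ENNReal.ofReal (1/(4+Real.sqrt 6)))
    (hPc : ∀ s : ℝ, volume ((Set.Icc 0 1 \ B) ∩ (fun a => s - a) ⁻¹' (Set.Icc 0 1 \ B))
      ≤ ENNReal.ofReal (1/(4+Real.sqrt 6))) : False := by
  set T : ℝ := 1/(4+Real.sqrt 6) with hTdef
  have hTpos : 0 < T := by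
    have := sqrt6_gt_two
    positivity
  set C : Set ℝ := Set.Icc 0 1 \ B with hCdef
  have hC : MeasurableSet C := measurableSet_Icc.diff hB
  set b : ℝ → ℝ≥0∞ := B.indicator 1 with hbdef
  set c : ℝ → ℝ≥0∞ := C.indicator 1 with hcdef
  set i : ℝ → ℝ≥0∞ := (Set.Icc (0:ℝ) 1).indicator 1 with hidef
  have mb : Measurable b := measurable_one.indicator hB
  have mc : Measurable c := measurable_one.indicator hC
  have mi : Measurable i := measurable_one.indicator measurableSet_Icc
  -- pointwise sum
  have hiadd : ∀ t, i t = b t + c t := by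
    intro t
    rw [hidef, hbdef, hcdef, hCdef]
    by_cases h1 : t ∈ B
    · have h2 : t ∈ Set.Icc (0:ℝ) 1 := hBsub h1
      have h3 : t ∉ Set.Icc (0:ℝ) 1 \ B := fun h => h.2 h1
      simp [Set.indicator_of_mem h1, Set.indicator_of_mem h2, Set.indicator_of_notMem h3]
    · by_cases h2 : t ∈ Set.Icc (0:ℝ) 1
      · have h3 : t ∈ Set.Icc (0:ℝ) 1 \ B := ⟨h2, h1⟩
        simp [Set.indicator_of_notMem h1, Set.indicator_of_mem h2, Set.indicator_of_mem h3]
      · have h3 : t ∉ Set.Icc (0:ℝ) 1 \ B := fun h => h2 h.1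
        simp [Set.indicator_of_notMem h1, Set.indicator_of_notMem h2,
          Set.indicator_of_notMem h3]
  -- pointwise bounds
  have hPb' : ∀ s : ℝ, cnv b b s ≤ ENNReal.ofReal T := by
    intro s; rw [hbdef, cnv_ind_eq_vol B hB s]; exact hPb s
  have hPc' : ∀ s : ℝ, cnv c c s ≤ ENNReal.ofReal T := by
    intro s; rw [hcdef, cnv_ind_eq_vol C hC s]; exact hPc s
  -- total masses
  have hBfin : volume B ≠ ⊤ := by
    have : volume B ≤ volume (Set.Icc (0:ℝ) 1) := measure_mono hBsub
    rw [Real.volume_Icc] at this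
    exact ne_top_of_le_ne_top (by simp) this
  have hCfin : volume C ≠ ⊤ := by
    have : volume C ≤ volume (Set.Icc (0:ℝ) 1) := measure_mono Set.diff_subset
    rw [Real.volume_Icc] at this
    exact ne_top_of_le_ne_top (by simp) this
  have hsum : volume B + volume C = 1 := by
    rw [hCdef, ← measure_union (disjoint_sdiff_self_right) (measurableSet_Icc.diff hB)]
    rw [Set.union_diff_cancel hBsub, Real.volume_Icc]
    norm_num
  set rB : ℝ := (volume B).toReal with hrBdef
  set rC : ℝ := (volume C).toReal with hrCdef
  have hrB0 : 0 ≤ rB := ENNReal.toReal_nonneg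
  have hrC0 : 0 ≤ rC := ENNReal.toReal_nonneg
  have hrsum : rB + rC = 1 := by
    rw [hrBdef, hrCdef, ← ENNReal.toReal_add hBfin hCfin, hsum]
    simp
  -- integrals of indicators
  have hib : (∫⁻ t, b t) = volume B := by rw [hbdef, lintegral_indicator hB]; simp
  have hic : (∫⁻ t, c t) = volume C := by rw [hcdef, lintegral_indicator hC]; simp
  -- energies
  set X : ℝ≥0∞ := ∫⁻ s, cnv b b s * cnv b b s with hXdef
  set Y : ℝ≥0∞ := ∫⁻ s, cnv c c s * cnv c c s with hYdef
  set xr : ℝ := T * (rB * rB) with hxrdef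
  set yr : ℝ := T * (rC * rC) with hyrdef
  have hxr0 : 0 ≤ xr := by positivity
  have hyr0 : 0 ≤ yr := by positivity
  have hX : X ≤ ENNReal.ofReal xr := by
    have step : X ≤ ENNReal.ofReal T * ((∫⁻ t, b t) * (∫⁻ t, b t)) := by
      calc X ≤ ∫⁻ s, ENNReal.ofReal T * cnv b b s := by
              apply lintegral_mono
              intro s
              exact mul_le_mul' (hPb' s) le_rfl
        _ = ENNReal.ofReal T * ∫⁻ s, cnv b b s :=
              lintegral_const_mul'' _ (meas_cnv mb mb).aemeasurable
        _ = ENNReal.ofReal T * ((∫⁻ t, b t) * (∫⁻ t, b t)) := by rw [lint_cnv mb mb]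
    calc X ≤ ENNReal.ofReal T * ((∫⁻ t, b t) * (∫⁻ t, b t)) := step
      _ = ENNReal.ofReal xr := by
          rw [hib, hxrdef, ← ENNReal.ofReal_toReal hBfin, ← hrBdef,
            ← ENNReal.ofReal_mul hrB0, ← ENNReal.ofReal_mul hTpos.le]
  have hY : Y ≤ ENNReal.ofReal yr := by
    have step : Y ≤ ENNReal.ofReal T * ((∫⁻ t, c t) * (∫⁻ t, c t)) := by
      calc Y ≤ ∫⁻ s, ENNReal.ofReal T * cnv c c s := by
              apply lintegral_mono
              intro s
              exact mul_le_mul' (hPc' s) le_rfl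
        _ = ENNReal.ofReal T * ∫⁻ s, cnv c c s :=
              lintegral_const_mul'' _ (meas_cnv mc mc).aemeasurable
        _ = ENNReal.ofReal T * ((∫⁻ t, c t) * (∫⁻ t, c t)) := by rw [lint_cnv mc mc]
    calc Y ≤ ENNReal.ofReal T * ((∫⁻ t, c t) * (∫⁻ t, c t)) := step
      _ = ENNReal.ofReal yr := by
          rw [hic, hyrdef, ← ENNReal.ofReal_toReal hCfin, ← hrCdef,
            ← ENNReal.ofReal_mul hrC0, ← ENNReal.ofReal_mul hTpos.le]
  -- energy identities
  have eX : X = ∫⁻ d, cor b b d * cor b b d := L3 mb mb mb mb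
  have eY : Y = ∫⁻ d, cor c c d * cor c c d := L3 mc mc mc mc
  have hCSbc : (∫⁻ d, cor b b d * cor c c d) ≤ X ^ (1/2:ℝ) * Y ^ (1/2:ℝ) := by
    refine (CS (meas_cor mb mb) (meas_cor mc mc)).trans ?_
    rw [← eX, ← eY]
  have hCScb : (∫⁻ d, cor c c d * cor b b d) ≤ Y ^ (1/2:ℝ) * X ^ (1/2:ℝ) := by
    refine (CS (meas_cor mc mc) (meas_cor mb mb)).trans ?_
    rw [← eX, ← eY]
  have hbc2 : (∫⁻ d, cor b c d * cor b c d) ≤ X ^ (1/2:ℝ) * Y ^ (1/2:ℝ) := by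
    rw [L4 mb mc]; exact hCSbc
  have hcb2 : (∫⁻ d, cor c b d * cor c b d) ≤ Y ^ (1/2:ℝ) * X ^ (1/2:ℝ) := by
    rw [L4 mc mb]; exact hCScb
  have hSS : (∫⁻ s, cnv b c s * cnv b c s) ≤ X ^ (1/2:ℝ) * Y ^ (1/2:ℝ) := by
    rw [L3 mb mc mb mc]; exact hCSbc
  have hPQ : (∫⁻ s, cnv b b s * cnv c c s)
      ≤ (Y ^ (1/2:ℝ) * X ^ (1/2:ℝ)) ^ (1/2:ℝ) * (X ^ (1/2:ℝ) * Y ^ (1/2:ℝ)) ^ (1/2:ℝ) := by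
    rw [L3 mb mb mc mc]
    refine (CS (meas_cor mc mb) (meas_cor mb mc)).trans ?_
    exact mul_le_mul' (ENNReal.rpow_le_rpow hcb2 (by norm_num))
      (ENNReal.rpow_le_rpow hbc2 (by norm_num))
  have hPS : (∫⁻ s, cnv b b s * cnv b c s)
      ≤ X ^ (1/2:ℝ) * (X ^ (1/2:ℝ) * Y ^ (1/2:ℝ)) ^ (1/2:ℝ) := by
    rw [L3 mb mb mb mc]
    refine (CS (meas_cor mb mb) (meas_cor mb mc)).trans ?_
    rw [← eX]
    exact mul_le_mul' le_rfl (ENNReal.rpow_le_rpow hbc2 (by norm_num))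
  have hQS : (∫⁻ s, cnv c c s * cnv b c s)
      ≤ (X ^ (1/2:ℝ) * Y ^ (1/2:ℝ)) ^ (1/2:ℝ) * Y ^ (1/2:ℝ) := by
    rw [L3 mc mc mb mc]
    refine (CS (meas_cor mb mc) (meas_cor mc mc)).trans ?_
    rw [← eY]
    exact mul_le_mul' (ENNReal.rpow_le_rpow hbc2 (by norm_num)) le_rfl
  -- expansion of cnv i i
  have hRs : ∀ s, cnv i i s = cnv b b s + (cnv c c s + (cnv b c s + cnv b c s)) := by
    intro s
    have e1 : cnv i i s = ∫⁻ t, (b t * b (s - t)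
        + (c t * c (s - t) + (b t * c (s - t) + c t * b (s - t)))) := by
      refine lintegral_congr fun t => ?_
      show i t * i (s - t) = _
      rw [hiadd t, hiadd (s - t)]; ring
    have m1 : Measurable fun t => b t * b (s - t) :=
      mb.mul (mb.comp (measurable_const.sub measurable_id))
    have m2 : Measurable fun t => c t * c (s - t) :=
      mc.mul (mc.comp (measurable_const.sub measurable_id))
    have m3 : Measurable fun t => b t * c (s - t) :=
      mb.mul (mc.comp (measurable_const.sub measurable_id))
    rw [e1, lintegral_add_left m1, lintegral_add_left m2, lintegral_add_left m3]
    have : (∫⁻ t, c t * b (s - t)) = cnv b c s := (cnv_comm s).symm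
    rw [this]
    rfl
  have hexp : ∀ s, cnv i i s * cnv i i s
      = cnv b b s * cnv b b s + (cnv c c s * cnv c c s + (2 * (cnv b b s * cnv c c s)
        + (4 * (cnv b b s * cnv b c s) + (4 * (cnv c c s * cnv b c s)
        + 4 * (cnv b c s * cnv b c s))))) := by
    intro s
    rw [hRs s]; ring
  have mPP : Measurable fun s => cnv b b s * cnv b b s := (meas_cnv mb mb).mul (meas_cnv mb mb)
  have mQQ : Measurable fun s => cnv c c s * cnv c c s := (meas_cnv mc mc).mul (meas_cnv mc mc)
  have mPQ : Measurable fun s => cnv b b s * cnv c c s := (meas_cnv mb mb).mul (meas_cnv mc mc)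
  have mPS : Measurable fun s => cnv b b s * cnv b c s := (meas_cnv mb mb).mul (meas_cnv mb mc)
  have mQS : Measurable fun s => cnv c c s * cnv b c s := (meas_cnv mc mc).mul (meas_cnv mb mc)
  have mSS : Measurable fun s => cnv b c s * cnv b c s := (meas_cnv mb mc).mul (meas_cnv mb mc)
  have hEIeq : (∫⁻ s, cnv i i s * cnv i i s)
      = X + (Y + (2 * (∫⁻ s, cnv b b s * cnv c c s)
        + (4 * (∫⁻ s, cnv b b s * cnv b c s) + (4 * (∫⁻ s, cnv c c s * cnv b c s)
        + 4 * (∫⁻ s, cnv b c s * cnv b c s))))) := by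
    rw [lintegral_congr hexp]
    rw [lintegral_add_left mPP, lintegral_add_left mQQ,
      lintegral_add_left (mPQ.const_mul 2), lintegral_add_left (mPS.const_mul 4),
      lintegral_add_left (mQS.const_mul 4)]
    rw [lintegral_const_mul'' 2 mPQ.aemeasurable, lintegral_const_mul'' 4 mPS.aemeasurable,
      lintegral_const_mul'' 4 mQS.aemeasurable, lintegral_const_mul'' 4 mSS.aemeasurable]
  -- real fourth roots
  set p : ℝ := Real.sqrt (Real.sqrt xr) with hpdef
  set q : ℝ := Real.sqrt (Real.sqrt yr) with hqdef
  have hp0 : 0 ≤ p := Real.sqrt_nonneg _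
  have hq0 : 0 ≤ q := Real.sqrt_nonneg _
  have hp2 : p ^ 2 = Real.sqrt xr := Real.sq_sqrt (Real.sqrt_nonneg _)
  have hq2 : q ^ 2 = Real.sqrt yr := Real.sq_sqrt (Real.sqrt_nonneg _)
  have hp4 : p ^ 4 = xr := by
    have : p ^ 4 = (p ^ 2) ^ 2 := by ring
    rw [this, hp2, Real.sq_sqrt hxr0]
  have hq4 : q ^ 4 = yr := by
    have : q ^ 4 = (q ^ 2) ^ 2 := by ring
    rw [this, hq2, Real.sq_sqrt hyr0]
  have hXp : X ≤ ENNReal.ofReal (p ^ 4) := by rw [hp4]; exact hX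
  have hYq : Y ≤ ENNReal.ofReal (q ^ 4) := by rw [hq4]; exact hY
  have hXhalf : X ^ (1/2:ℝ) ≤ ENNReal.ofReal (p ^ 2) := by
    calc X ^ (1/2:ℝ) ≤ (ENNReal.ofReal xr) ^ (1/2:ℝ) :=
          ENNReal.rpow_le_rpow hX (by norm_num)
      _ = ENNReal.ofReal (xr ^ (1/2:ℝ)) := ENNReal.ofReal_rpow_of_nonneg hxr0 (by norm_num)
      _ = ENNReal.ofReal (p ^ 2) := by rw [hp2, Real.sqrt_eq_rpow]
  have hYhalf : Y ^ (1/2:ℝ) ≤ ENNReal.ofReal (q ^ 2) := by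
    calc Y ^ (1/2:ℝ) ≤ (ENNReal.ofReal yr) ^ (1/2:ℝ) :=
          ENNReal.rpow_le_rpow hY (by norm_num)
      _ = ENNReal.ofReal (yr ^ (1/2:ℝ)) := ENNReal.ofReal_rpow_of_nonneg hyr0 (by norm_num)
      _ = ENNReal.ofReal (q ^ 2) := by rw [hq2, Real.sqrt_eq_rpow]
  have hXYhalf : X ^ (1/2:ℝ) * Y ^ (1/2:ℝ) ≤ ENNReal.ofReal (p ^ 2 * q ^ 2) := by
    rw [ENNReal.ofReal_mul (by positivity)]
    exact mul_le_mul' hXhalf hYhalf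
  have hYXhalf : Y ^ (1/2:ℝ) * X ^ (1/2:ℝ) ≤ ENNReal.ofReal (q ^ 2 * p ^ 2) := by
    rw [ENNReal.ofReal_mul (by positivity)]
    exact mul_le_mul' hYhalf hXhalf
  have sqrt_sq_mul : ∀ u v : ℝ, 0 ≤ u → 0 ≤ v → (u ^ 2 * v ^ 2) ^ (1/2:ℝ) = u * v := by
    intro u v hu hv
    rw [← Real.sqrt_eq_rpow, show u ^ 2 * v ^ 2 = (u * v) ^ 2 by ring,
      Real.sqrt_sq (by positivity)]
  have hXYq : (X ^ (1/2:ℝ) * Y ^ (1/2:ℝ)) ^ (1/2:ℝ) ≤ ENNReal.ofReal (p * q) := by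
    calc (X ^ (1/2:ℝ) * Y ^ (1/2:ℝ)) ^ (1/2:ℝ)
        ≤ (ENNReal.ofReal (p ^ 2 * q ^ 2)) ^ (1/2:ℝ) :=
          ENNReal.rpow_le_rpow hXYhalf (by norm_num)
      _ = ENNReal.ofReal ((p ^ 2 * q ^ 2) ^ (1/2:ℝ)) :=
          ENNReal.ofReal_rpow_of_nonneg (by positivity) (by norm_num)
      _ = ENNReal.ofReal (p * q) := by rw [sqrt_sq_mul p q hp0 hq0]
  have hYXq : (Y ^ (1/2:ℝ) * X ^ (1/2:ℝ)) ^ (1/2:ℝ) ≤ ENNReal.ofReal (q * p) := by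
    calc (Y ^ (1/2:ℝ) * X ^ (1/2:ℝ)) ^ (1/2:ℝ)
        ≤ (ENNReal.ofReal (q ^ 2 * p ^ 2)) ^ (1/2:ℝ) :=
          ENNReal.rpow_le_rpow hYXhalf (by norm_num)
      _ = ENNReal.ofReal ((q ^ 2 * p ^ 2) ^ (1/2:ℝ)) :=
          ENNReal.ofReal_rpow_of_nonneg (by positivity) (by norm_num)
      _ = ENNReal.ofReal (q * p) := by rw [sqrt_sq_mul q p hq0 hp0]
  -- assemble the upper bound
  have htwo : (2 : ℝ≥0∞) = ENNReal.ofReal (2:ℝ) := by simp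
  have hfour : (4 : ℝ≥0∞) = ENNReal.ofReal (4:ℝ) := by simp
  have hupper : (∫⁻ s, cnv i i s * cnv i i s)
      ≤ ENNReal.ofReal (p ^ 4 + (q ^ 4 + (2 * ((q * p) * (p * q))
        + (4 * (p ^ 2 * (p * q)) + (4 * ((p * q) * q ^ 2) + 4 * (p ^ 2 * q ^ 2)))))) := by
    rw [hEIeq]
    rw [ENNReal.ofReal_add (by positivity) (by positivity),
      ENNReal.ofReal_add (by positivity) (by positivity),
      ENNReal.ofReal_add (by positivity) (by positivity),
      ENNReal.ofReal_add (by positivity) (by positivity),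
      ENNReal.ofReal_add (by positivity) (by positivity)]
    refine add_le_add hXp (add_le_add hYq (add_le_add ?_ (add_le_add ?_ (add_le_add ?_ ?_))))
    · rw [ENNReal.ofReal_mul (by norm_num : (0:ℝ) ≤ 2), ← htwo]
      refine mul_le_mul' le_rfl ?_
      refine (hPQ.trans ?_)
      rw [ENNReal.ofReal_mul (by positivity)]
      exact mul_le_mul' hYXq hXYq
    · rw [ENNReal.ofReal_mul (by norm_num : (0:ℝ) ≤ 4), ← hfour]
      refine mul_le_mul' le_rfl ?_
      refine (hPS.trans ?_)
      rw [ENNReal.ofReal_mul (by positivity)]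
      exact mul_le_mul' hXhalf hXYq
    · rw [ENNReal.ofReal_mul (by norm_num : (0:ℝ) ≤ 4), ← hfour]
      refine mul_le_mul' le_rfl ?_
      refine (hQS.trans ?_)
      rw [ENNReal.ofReal_mul (by positivity)]
      exact mul_le_mul' hXYq hYhalf
    · rw [ENNReal.ofReal_mul (by norm_num : (0:ℝ) ≤ 4), ← hfour]
      refine mul_le_mul' le_rfl ?_
      refine (hSS.trans ?_)
      rw [ENNReal.ofReal_mul (by positivity)]
      exact mul_le_mul' hXhalf hYhalf
  -- lower bound
  have hlower : ENNReal.ofReal (2/3) ≤ ∫⁻ s, cnv i i s * cnv i i s := by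
    rw [hidef]; exact EI_lb
  -- combine
  have hreal : (2/3 : ℝ) ≤ p ^ 4 + (q ^ 4 + (2 * ((q * p) * (p * q))
      + (4 * (p ^ 2 * (p * q)) + (4 * ((p * q) * q ^ 2) + 4 * (p ^ 2 * q ^ 2))))) := by
    rw [← ENNReal.ofReal_le_ofReal_iff (by positivity)]
    exact hlower.trans hupper
  have hpq2 : p ^ 2 + q ^ 2 = Real.sqrt T := by
    rw [hp2, hq2, hxrdef, hyrdef,
      Real.sqrt_mul hTpos.le, Real.sqrt_mul hTpos.le,
      Real.sqrt_mul_self hrB0, Real.sqrt_mul_self hrC0, ← mul_add, hrsum, mul_one]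
  have := numeric p q hp0 hq0 hpq2
  nlinarith [this, hreal]

lemma sym_img (S : Set ℝ) (x : ℝ) :
    S ∩ (fun a => 2*x - a) ⁻¹' S = (fun a => 2*x - a) '' (S ∩ (fun a => 2*x - a) ⁻¹' S) := by
  ext z
  simp only [Set.mem_image, Set.mem_inter_iff, Set.mem_preimage]
  constructor
  · rintro ⟨hz1, hz2⟩
    refine ⟨2*x - z, ⟨hz2, ?_⟩, by ring⟩
    have e : 2*x - (2*x - z) = z := by ring
    rw [e]; exact hz1
  · rintro ⟨a, ⟨ha1, ha2⟩, rfl⟩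
    refine ⟨ha2, ?_⟩
    have e : 2*x - (2*x - a) = a := by ring
    rw [e]; exact ha1

/-- Every measurable 2-coloring of [0,1] has a monochromatic measurable symmetric
subset of Lebesgue measure at least 1/(4 + √6). -/
theorem stmt_15 (B : Set ℝ) (hB : MeasurableSet B) (hBsub : B ⊆ Set.Icc 0 1) :
    ∃ A : Set ℝ, MeasurableSet A ∧ (A ⊆ B ∨ A ⊆ Set.Icc 0 1 \ B) ∧
      (∃ x : ℝ, A = (fun a => 2 * x - a) '' A) ∧
      ENNReal.ofReal (1 / (4 + Real.sqrt 6)) ≤ volume A := by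
  by_contra hcon
  push_neg at hcon
  apply core B hB hBsub
  · intro s
    have efun : (fun a : ℝ => s - a) = (fun a : ℝ => 2 * (s/2) - a) := by
      funext a; ring
    rw [efun]
    set A := B ∩ (fun a : ℝ => 2 * (s/2) - a) ⁻¹' B with hAdef
    have hAm : MeasurableSet A := hB.inter (hB.preimage (measurable_const.sub measurable_id))
    have hsym : A = (fun a => 2 * (s/2) - a) '' A := sym_img B (s/2)
    exact (hcon A hAm (Or.inl Set.inter_subset_left) ⟨s/2, hsym⟩).le
  · intro s
    have efun : (fun a : ℝ => s - a) = (fun a : ℝ => 2 * (s/2) - a) := by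
      funext a; ring
    rw [efun]
    set A := (Set.Icc (0:ℝ) 1 \ B) ∩ (fun a : ℝ => 2 * (s/2) - a) ⁻¹' (Set.Icc (0:ℝ) 1 \ B)
      with hAdef
    have hAm : MeasurableSet A :=
      (measurableSet_Icc.diff hB).inter
        ((measurableSet_Icc.diff hB).preimage (measurable_const.sub measurable_id))
    have hsym : A = (fun a => 2 * (s/2) - a) '' A := sym_img _ (s/2)
    exact (hcon A hAm (Or.inr Set.inter_subset_left) ⟨s/2, hsym⟩).le
end

section
/- For every r ∈ ℕ, the sequence ms([n], r) converges as n → ∞, and its limit equals its infimum over n ∈ ℕ, which equals ms([0,1], r). -/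
open MeasureTheory Filter

/-- MS([n], r): the maximal k such that every r-coloring of {1,…,n} admits a
monochromatic symmetric subset of size ≥ k. -/
noncomputable def MSdisc (n r : ℕ) : ℕ :=
  sSup {k : ℕ | ∀ χ : ℤ → Fin r, ∃ A : Set ℤ, A ⊆ Set.Icc 1 (n : ℤ) ∧
    (∃ c, ∀ a ∈ A, χ a = c) ∧ (∃ s : ℤ, A = (fun a => s - a) '' A) ∧ k ≤ A.ncard}

/-- ms([0,1], r): supremum of ε > 0 such that every measurable r-coloring of
[0,1] admits a monochromatic measurable symmetric subset of measure ≥ ε. -/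
noncomputable def msUnit (r : ℕ) : ℝ :=
  sSup {ε : ℝ | 0 < ε ∧ ∀ χ : ℝ → Fin r, Measurable χ →
    ∃ A : Set ℝ, MeasurableSet A ∧ A ⊆ Set.Icc 0 1 ∧ (∃ c, ∀ a ∈ A, χ a = c) ∧
      (∃ x : ℝ, A = (fun a => 2 * x - a) '' A) ∧ ENNReal.ofReal ε ≤ volume A}

open Set
open scoped ENNReal NNReal

namespace Stmt18

def Kset (n r : ℕ) : Set ℕ :=
  {k : ℕ | ∀ χ : ℤ → Fin r, ∃ A : Set ℤ, A ⊆ Set.Icc 1 (n : ℤ) ∧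
    (∃ c, ∀ a ∈ A, χ a = c) ∧ (∃ s : ℤ, A = (fun a => s - a) '' A) ∧ k ≤ A.ncard}

def msSet (r : ℕ) : Set ℝ :=
  {ε : ℝ | 0 < ε ∧ ∀ χ : ℝ → Fin r, Measurable χ →
    ∃ A : Set ℝ, MeasurableSet A ∧ A ⊆ Set.Icc 0 1 ∧ (∃ c, ∀ a ∈ A, χ a = c) ∧
      (∃ x : ℝ, A = (fun a => 2 * x - a) '' A) ∧ ENNReal.ofReal ε ≤ volume A}

lemma msdisc_eq (n r : ℕ) : MSdisc n r = sSup (Kset n r) := rfl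

lemma msUnit_eq (r : ℕ) : msUnit r = sSup (msSet r) := rfl

lemma ncard_Icc_int (n : ℕ) : (Set.Icc (1:ℤ) (n:ℤ)).ncard = n := by
  rw [← Finset.coe_Icc, Set.ncard_coe_finset, Int.card_Icc]
  simp

lemma zero_mem_Kset {r : ℕ} (hr : 0 < r) (n : ℕ) : 0 ∈ Kset n r := by
  intro χ
  exact ⟨∅, empty_subset _, ⟨⟨0, hr⟩, by simp⟩, ⟨0, by simp⟩, by simp⟩

lemma mem_Kset_le {r : ℕ} (hr : 0 < r) {n k : ℕ} (hk : k ∈ Kset n r) : k ≤ n := by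
  obtain ⟨A, hsub, -, -, hcard⟩ := hk (fun _ => ⟨0, hr⟩)
  calc k ≤ A.ncard := hcard
    _ ≤ (Set.Icc (1:ℤ) (n:ℤ)).ncard := Set.ncard_le_ncard hsub (Set.finite_Icc _ _)
    _ = n := ncard_Icc_int n

lemma bddAbove_Kset {r : ℕ} (hr : 0 < r) (n : ℕ) : BddAbove (Kset n r) :=
  ⟨n, fun _ hk => mem_Kset_le hr hk⟩

lemma msdisc_mem {r : ℕ} (hr : 0 < r) (n : ℕ) : MSdisc n r ∈ Kset n r :=
  Nat.sSup_mem ⟨0, zero_mem_Kset hr n⟩ (bddAbove_Kset hr n)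

lemma le_msdisc {r : ℕ} (hr : 0 < r) {n k : ℕ} (hk : k ∈ Kset n r) : k ≤ MSdisc n r :=
  le_csSup (bddAbove_Kset hr n) hk

lemma mem_msSet_le_one {r : ℕ} (hr : 0 < r) {ε : ℝ} (hε : ε ∈ msSet r) : ε ≤ 1 := by
  obtain ⟨hpos, h⟩ := hε
  obtain ⟨A, -, hsub, -, -, hvol⟩ := h (fun _ => ⟨0, hr⟩) measurable_const
  have h1 : volume A ≤ volume (Set.Icc (0:ℝ) 1) := measure_mono hsub
  rw [Real.volume_Icc] at h1
  have h2 : ENNReal.ofReal ε ≤ ENNReal.ofReal 1 := by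
    simpa using hvol.trans h1
  exact (ENNReal.ofReal_le_ofReal_iff (by norm_num)).mp h2

lemma bddAbove_msSet {r : ℕ} (hr : 0 < r) : BddAbove (msSet r) :=
  ⟨1, fun _ hx => mem_msSet_le_one hr hx⟩

lemma msUnit_nonneg (r : ℕ) : 0 ≤ msUnit r :=
  Real.sSup_nonneg (fun _ hx => hx.1.le)

lemma vol_image_refl (c : ℝ) {S : Set ℝ} (hS : MeasurableSet S) :
    volume ((fun t => c - t) '' S) = volume S := by
  have himg : (fun t : ℝ => c - t) '' S = (fun t : ℝ => c - t) ⁻¹' S := by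
    ext t
    constructor
    · rintro ⟨a, ha, rfl⟩; simpa [sub_sub_cancel] using ha
    · intro ht; exact ⟨c - t, ht, by ring⟩
  rw [himg]
  exact (Measure.measurePreserving_sub_left volume c).measure_preimage
    hS.nullMeasurableSet

lemma refl_inj (c : ℝ) : Function.Injective (fun t : ℝ => c - t) := by
  intro a b h; simp only at h; linarith

lemma refl_image_inter (c : ℝ) (A B : Set ℝ) :
    (fun t : ℝ => c - t) '' (A ∩ B) = ((fun t : ℝ => c - t) '' A) ∩ ((fun t : ℝ => c - t) '' B) :=
  Set.image_inter (refl_inj c)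

lemma refl_image_image (c : ℝ) (A : Set ℝ) :
    (fun t : ℝ => c - t) '' ((fun t : ℝ => c - t) '' A) = A := by
  rw [← Set.image_comp]
  simp [Function.comp_def]

lemma refl_inter_image_symm (c : ℝ) (S : Set ℝ) :
    S ∩ ((fun t : ℝ => c - t) '' S) = (fun t : ℝ => c - t) '' (S ∩ ((fun t : ℝ => c - t) '' S)) := by
  rw [refl_image_inter, refl_image_image, Set.inter_comm]


lemma ceil_block {n : ℕ} (hn : 0 < n) {t : ℝ} {i : ℤ} 
    (h1 : ((i:ℝ)-1)/n < t) (h2 : t < ((i:ℝ))/n) : ⌈(n:ℝ) * t⌉ = i := by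
  have hn' : (0:ℝ) < n := by exact_mod_cast hn
  rw [Int.ceil_eq_iff]
  constructor
  · have := (div_lt_iff₀ hn').mp h1
    nlinarith
  · have := (lt_div_iff₀ hn').mp h2
    nlinarith

lemma block_decomp {a b c : ℝ} (A : Set ℝ) :
    volume (A ∩ Icc a b) ≤ volume (A ∩ Ioo a c) + volume (A ∩ Ioo c b) := by
  have hsub : A ∩ Icc a b ⊆ (A ∩ Ioo a c) ∪ ((A ∩ Ioo c b) ∪ {a, c, b}) := by
    rintro t ⟨htA, ht1, ht2⟩
    by_cases h1 : t = a; · right; right; simp [h1]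
    by_cases h2 : t = c; · right; right; simp [h2]
    by_cases h3 : t = b; · right; right; simp [h3]
    rcases lt_or_gt_of_ne h2 with h4 | h4
    · left; exact ⟨htA, lt_of_le_of_ne ht1 (Ne.symm h1), h4⟩
    · right; left; exact ⟨htA, h4, lt_of_le_of_ne ht2 h3⟩
  calc volume (A ∩ Icc a b) ≤ volume ((A ∩ Ioo a c) ∪ ((A ∩ Ioo c b) ∪ {a, c, b})) :=
        measure_mono hsub
    _ ≤ volume (A ∩ Ioo a c) + volume ((A ∩ Ioo c b) ∪ {a, c, b}) := measure_union_le _ _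
    _ ≤ volume (A ∩ Ioo a c) + (volume (A ∩ Ioo c b) + volume ({a, c, b} : Set ℝ)) := by
        gcongr; exact measure_union_le _ _
    _ = volume (A ∩ Ioo a c) + volume (A ∩ Ioo c b) := by
        rw [show volume ({a, c, b} : Set ℝ) = 0 from Set.Finite.measure_zero (Set.toFinite _) volume,
          add_zero]

lemma cover_blocks {A : Set ℝ} {n : ℕ} (hn : 0 < n) (hA : A ⊆ Icc 0 1) :
    A ⊆ ⋃ i ∈ Finset.Icc (0:ℤ) (n:ℤ), Icc (((i:ℝ)-1)/n) ((i:ℝ)/n) := by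
  intro t ht
  have ht' := hA ht
  have hn' : (0:ℝ) < n := by exact_mod_cast hn
  simp only [Set.mem_iUnion, Finset.mem_Icc]
  refine ⟨⌈(n:ℝ) * t⌉, ⟨Int.ceil_nonneg (mul_nonneg hn'.le ht'.1), ?_⟩, ?_, ?_⟩
  · exact Int.ceil_le.mpr (by push_cast; nlinarith [ht'.2] : (n:ℝ) * t ≤ ((n:ℤ):ℝ))
  · rw [div_le_iff₀ hn']
    have := Int.ceil_lt_add_one ((n:ℝ) * t)
    nlinarith
  · rw [le_div_iff₀ hn']
    have := Int.le_ceil ((n:ℝ) * t)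
    nlinarith



lemma L1_mem {r : ℕ} (hr : 0 < r) {ε : ℝ} (hε : ε ∈ msSet r) {n : ℕ} (hn : 0 < n) :
    ⌈(n:ℝ) * ε⌉₊ ∈ Kset n r := by
  intro χ
  have hn' : (0:ℝ) < n := by exact_mod_cast hn
  have hmeas : Measurable (fun t : ℝ => χ ⌈(n:ℝ) * t⌉) :=
    Measurable.of_discrete.comp (Int.measurable_ceil.comp (measurable_const.mul measurable_id))
  obtain ⟨A, hAm, hAsub, ⟨c, hc⟩, ⟨x, hx⟩, hvol⟩ := hε.2 _ hmeas
  set σ : ℝ := 2 * x with hσdef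
  set m : ℤ := ⌊σ * n⌋ with hm
  set θ : ℝ := Int.fract (σ * n) with hθ
  have hθ0 : 0 ≤ θ := Int.fract_nonneg _
  have hθ1 : θ < 1 := Int.fract_lt_one _
  have hσn : σ * (n:ℝ) = (m:ℝ) + θ := by
    rw [hθ, hm]
    exact (Int.floor_add_fract (σ * (n:ℝ))).symm
  have hσ : σ = ((m:ℝ) + θ)/n := by rw [eq_div_iff hn'.ne', hσn]
  set L : ℤ → Set ℝ := fun i => Ioo (((i:ℝ)-1)/n) (((i:ℝ)-1+θ)/n) with hL
  set R : ℤ → Set ℝ := fun i => Ioo (((i:ℝ)-1+θ)/n) ((i:ℝ)/n) with hR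
  have hLrefl : ∀ i : ℤ, (fun t : ℝ => σ - t) '' (L i) = L (m + 2 - i) := by
    intro i
    have hn0 : (n:ℝ) ≠ 0 := hn'.ne'
    have e1 : σ - (((i:ℝ)-1+θ)/n) = (((m + 2 - i : ℤ):ℝ)-1)/n := by
      rw [hσ]; push_cast; field_simp; ring
    have e2 : σ - (((i:ℝ)-1)/n) = (((m + 2 - i : ℤ):ℝ)-1+θ)/n := by
      rw [hσ]; push_cast; field_simp; ring
    rw [hL]
    simp only
    rw [Set.image_const_sub_Ioo, e1, e2]
  have hRrefl : ∀ i : ℤ, (fun t : ℝ => σ - t) '' (R i) = R (m + 1 - i) := by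
    intro i
    have hn0 : (n:ℝ) ≠ 0 := hn'.ne'
    have e1 : σ - ((i:ℝ)/n) = (((m + 1 - i : ℤ):ℝ)-1+θ)/n := by
      rw [hσ]; push_cast; field_simp; ring
    have e2 : σ - (((i:ℝ)-1+θ)/n) = ((m + 1 - i : ℤ):ℝ)/n := by
      rw [hσ]; push_cast; field_simp; ring
    rw [hR]
    simp only
    rw [Set.image_const_sub_Ioo, e1, e2]
  have hAx : A = (fun t : ℝ => σ - t) '' A := hx
  have hmeasL : ∀ i : ℤ, MeasurableSet (A ∩ L i) := fun _ => hAm.inter measurableSet_Ioo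
  have hmeasR : ∀ i : ℤ, MeasurableSet (A ∩ R i) := fun _ => hAm.inter measurableSet_Ioo
  have hsymL : ∀ i : ℤ, volume (A ∩ L (m + 2 - i)) = volume (A ∩ L i) := by
    intro i
    conv_lhs => rw [hAx, ← hLrefl i, ← refl_image_inter]
    exact vol_image_refl σ (hmeasL i)
  have hsymR : ∀ i : ℤ, volume (A ∩ R (m + 1 - i)) = volume (A ∩ R i) := by
    intro i
    conv_lhs => rw [hAx, ← hRrefl i, ← refl_image_inter]
    exact vol_image_refl σ (hmeasR i)
  set Dl : Set ℤ := {i : ℤ | 0 < volume (A ∩ L i)} with hDl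
  set Dr : Set ℤ := {i : ℤ | 0 < volume (A ∩ R i)} with hDr
  -- membership info
  have hink : ∀ (i : ℤ) (t : ℝ), t ∈ A → t ∈ L i ∪ R i → (1 ≤ i ∧ i ≤ (n:ℤ)) ∧ χ i = c := by
    intro i t htA ht
    have ht01 := hAsub htA
    have hbound : ((i:ℝ)-1)/n < t ∧ t < (i:ℝ)/n := by
      rcases ht with h | h
      · refine ⟨h.1, lt_of_lt_of_le h.2 ?_⟩
        gcongr
        linarith
      · refine ⟨lt_of_le_of_lt ?_ h.1, h.2⟩
        gcongr
        linarith
    have hi1 : (0:ℝ) < (i:ℝ) := by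
      have h0 : (0:ℝ) ≤ t := ht01.1
      have hq : 0 < (i:ℝ)/n := lt_of_le_of_lt h0 hbound.2
      rcases div_pos_iff.mp hq with ⟨h, _⟩ | ⟨_, h⟩
      · exact h
      · linarith
    have hi2 : (i:ℝ) - 1 < (n:ℝ) := by
      have h1 : t ≤ 1 := ht01.2
      have := hbound.1
      rw [div_lt_iff₀ hn'] at this
      nlinarith
    refine ⟨⟨?_, ?_⟩, ?_⟩
    · exact_mod_cast hi1
    · have : (i:ℝ) < (n:ℝ) + 1 := by linarith
      exact_mod_cast Int.lt_add_one_iff.mp (by exact_mod_cast this)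
    · have := hc t htA
      rwa [ceil_block hn hbound.1 hbound.2] at this
  have hDlsub : Dl ⊆ Set.Icc (1:ℤ) (n:ℤ) := by
    intro i hi
    obtain ⟨t, htA, htL⟩ : (A ∩ L i).Nonempty := nonempty_of_measure_ne_zero hi.ne'
    exact Set.mem_Icc.mpr (hink i t htA (Or.inl htL)).1
  have hDrsub : Dr ⊆ Set.Icc (1:ℤ) (n:ℤ) := by
    intro i hi
    obtain ⟨t, htA, htR⟩ : (A ∩ R i).Nonempty := nonempty_of_measure_ne_zero hi.ne'
    exact Set.mem_Icc.mpr (hink i t htA (Or.inr htR)).1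
  have hDlfin : Dl.Finite := (Set.finite_Icc _ _).subset hDlsub
  have hDrfin : Dr.Finite := (Set.finite_Icc _ _).subset hDrsub
  have hDlmono : ∀ i ∈ Dl, χ i = c := by
    intro i hi
    obtain ⟨t, htA, htL⟩ : (A ∩ L i).Nonempty := nonempty_of_measure_ne_zero hi.ne'
    exact (hink i t htA (Or.inl htL)).2
  have hDrmono : ∀ i ∈ Dr, χ i = c := by
    intro i hi
    obtain ⟨t, htA, htR⟩ : (A ∩ R i).Nonempty := nonempty_of_measure_ne_zero hi.ne'
    exact (hink i t htA (Or.inr htR)).2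
  have hDlsym : Dl = (fun i : ℤ => (m + 2) - i) '' Dl := by
    have hmem : ∀ i : ℤ, i ∈ Dl → (m + 2 - i) ∈ Dl := by
      intro i hi
      show 0 < volume (A ∩ L (m + 2 - i))
      rw [hsymL i]; exact hi
    ext j
    constructor
    · intro hj; exact ⟨m + 2 - j, hmem j hj, by ring⟩
    · rintro ⟨i, hi, rfl⟩; exact hmem i hi
  have hDrsym : Dr = (fun i : ℤ => (m + 1) - i) '' Dr := by
    have hmem : ∀ i : ℤ, i ∈ Dr → (m + 1 - i) ∈ Dr := by
      intro i hi
      show 0 < volume (A ∩ R (m + 1 - i))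
      rw [hsymR i]; exact hi
    ext j
    constructor
    · intro hj; exact ⟨m + 1 - j, hmem j hj, by ring⟩
    · rintro ⟨i, hi, rfl⟩; exact hmem i hi
  -- the counting bound
  set I : Finset ℤ := Finset.Icc (0:ℤ) (n:ℤ) with hI
  have hsum1 : volume A ≤ ∑ i ∈ I, volume (A ∩ Icc (((i:ℝ)-1)/n) ((i:ℝ)/n)) := by
    have h1 : A ⊆ ⋃ i ∈ I, A ∩ Icc (((i:ℝ)-1)/n) ((i:ℝ)/n) := by
      intro t ht
      have := cover_blocks hn hAsub ht
      simp only [Set.mem_iUnion] at this ⊢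
      obtain ⟨i, hi, hti⟩ := this
      exact ⟨i, hi, ht, hti⟩
    calc volume A ≤ volume (⋃ i ∈ I, A ∩ Icc (((i:ℝ)-1)/n) ((i:ℝ)/n)) := measure_mono h1
      _ ≤ ∑ i ∈ I, volume (A ∩ Icc (((i:ℝ)-1)/n) ((i:ℝ)/n)) := measure_biUnion_finset_le _ _
  have hsum2 : ∑ i ∈ I, volume (A ∩ Icc (((i:ℝ)-1)/n) ((i:ℝ)/n)) ≤
      (∑ i ∈ I, volume (A ∩ L i)) + ∑ i ∈ I, volume (A ∩ R i) := by
    rw [← Finset.sum_add_distrib]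
    exact Finset.sum_le_sum (fun i _ => block_decomp (c := ((i:ℝ)-1+θ)/n) A)
  have key : ∀ (D : Set ℤ) (hDfin : D.Finite) (F : ℤ → Set ℝ) (b : ℝ),
      0 ≤ b → D ⊆ Set.Icc (1:ℤ) (n:ℤ) → (∀ i, i ∉ D → volume (A ∩ F i) = 0) → (∀ i, volume (A ∩ F i) ≤ ENNReal.ofReal b) →
      ∑ i ∈ I, volume (A ∩ F i) ≤ (hDfin.toFinset.card : ℝ≥0∞) * ENNReal.ofReal b := by
    intro D hDfin F b hb hDsub hzero hle
    have hsubI : hDfin.toFinset ⊆ I := by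
      intro i hi
      have := hDsub (hDfin.mem_toFinset.mp hi)
      rw [hI, Finset.mem_Icc]
      rw [Set.mem_Icc] at this
      exact ⟨le_trans (by norm_num) this.1, this.2⟩
    calc ∑ i ∈ I, volume (A ∩ F i) = ∑ i ∈ hDfin.toFinset, volume (A ∩ F i) := by
          refine (Finset.sum_subset hsubI ?_).symm
          intro i _ hni
          exact hzero i (fun hmem => hni (hDfin.mem_toFinset.mpr hmem))
      _ ≤ ∑ _i ∈ hDfin.toFinset, ENNReal.ofReal b := Finset.sum_le_sum (fun i _ => hle i)
      _ = (hDfin.toFinset.card : ℝ≥0∞) * ENNReal.ofReal b := by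
          rw [Finset.sum_const, nsmul_eq_mul]
  have hLvol : ∀ i : ℤ, volume (L i) = ENNReal.ofReal (θ/n) := by
    intro i
    rw [hL]
    simp only
    rw [Real.volume_Ioo]
    congr 1
    ring
  have hRvol : ∀ i : ℤ, volume (R i) = ENNReal.ofReal ((1-θ)/n) := by
    intro i
    rw [hR]
    simp only
    rw [Real.volume_Ioo]
    congr 1
    ring
  have hsumL : ∑ i ∈ I, volume (A ∩ L i) ≤ (hDlfin.toFinset.card : ℝ≥0∞) * ENNReal.ofReal (θ/n) := by
    refine key Dl hDlfin L (θ/n) (by positivity) hDlsub ?_ ?_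
    · intro i hi
      rw [hDl, Set.mem_setOf_eq, not_lt, nonpos_iff_eq_zero] at hi
      exact hi
    · intro i
      exact le_trans (measure_mono Set.inter_subset_right) (le_of_eq (hLvol i))
  have hsumR : ∑ i ∈ I, volume (A ∩ R i) ≤ (hDrfin.toFinset.card : ℝ≥0∞) * ENNReal.ofReal ((1-θ)/n) := by
    refine key Dr hDrfin R ((1-θ)/n) (div_nonneg (by linarith) hn'.le) hDrsub ?_ ?_
    · intro i hi
      rw [hDr, Set.mem_setOf_eq, not_lt, nonpos_iff_eq_zero] at hi
      exact hi
    · intro i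
      exact le_trans (measure_mono Set.inter_subset_right) (le_of_eq (hRvol i))
  set M : ℕ := max hDlfin.toFinset.card hDrfin.toFinset.card with hM
  have htotal : ENNReal.ofReal ε ≤ (M : ℝ≥0∞) * ENNReal.ofReal (1/n) := by
    have h1 : ENNReal.ofReal ε ≤ (hDlfin.toFinset.card : ℝ≥0∞) * ENNReal.ofReal (θ/n)
        + (hDrfin.toFinset.card : ℝ≥0∞) * ENNReal.ofReal ((1-θ)/n) :=
      hvol.trans (hsum1.trans (hsum2.trans (add_le_add hsumL hsumR)))
    have h2 : (hDlfin.toFinset.card : ℝ≥0∞) * ENNReal.ofReal (θ/n)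
        + (hDrfin.toFinset.card : ℝ≥0∞) * ENNReal.ofReal ((1-θ)/n)
        ≤ (M : ℝ≥0∞) * (ENNReal.ofReal (θ/n) + ENNReal.ofReal ((1-θ)/n)) := by
      rw [mul_add]
      gcongr
      · exact_mod_cast Nat.cast_le.mpr (le_max_left _ _)
      · exact_mod_cast Nat.cast_le.mpr (le_max_right _ _)
    have h3 : ENNReal.ofReal (θ/n) + ENNReal.ofReal ((1-θ)/n) = ENNReal.ofReal (1/n) := by
      rw [← ENNReal.ofReal_add (by positivity) (div_nonneg (by linarith) hn'.le)]
      congr 1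
      field_simp
      ring
    calc ENNReal.ofReal ε ≤ _ := h1
      _ ≤ (M : ℝ≥0∞) * (ENNReal.ofReal (θ/n) + ENNReal.ofReal ((1-θ)/n)) := h2
      _ = (M : ℝ≥0∞) * ENNReal.ofReal (1/n) := by rw [h3]
  have hMreal : (n:ℝ) * ε ≤ (M : ℝ) := by
    have h4 : (M : ℝ≥0∞) * ENNReal.ofReal (1/n) = ENNReal.ofReal ((M : ℝ) * (1/n)) := by
      rw [ENNReal.ofReal_mul (Nat.cast_nonneg _), ENNReal.ofReal_natCast]
    rw [h4] at htotal
    have h5 : ε ≤ (M : ℝ) * (1/n) := by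
      refine (ENNReal.ofReal_le_ofReal_iff (mul_nonneg (Nat.cast_nonneg _) (by positivity))).mp htotal
    have := mul_le_mul_of_nonneg_left h5 hn'.le
    calc (n:ℝ) * ε ≤ (n:ℝ) * ((M:ℝ) * (1/n)) := this
      _ = (M : ℝ) := by field_simp
  have hceil : ⌈(n:ℝ) * ε⌉₊ ≤ M := Nat.ceil_le.mpr hMreal
  -- choose the bigger of the two
  rcases le_total hDrfin.toFinset.card hDlfin.toFinset.card with hcmp | hcmp
  · refine ⟨Dl, hDlsub, ⟨c, hDlmono⟩, ⟨m + 2, hDlsym⟩, ?_⟩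
    have hnc : Dl.ncard = hDlfin.toFinset.card := Set.ncard_eq_toFinset_card Dl hDlfin
    rw [hnc]
    exact le_trans hceil (le_of_eq (max_eq_left hcmp))
  · refine ⟨Dr, hDrsub, ⟨c, hDrmono⟩, ⟨m + 1, hDrsym⟩, ?_⟩
    have hnc : Dr.ncard = hDrfin.toFinset.card := Set.ncard_eq_toFinset_card Dr hDrfin
    rw [hnc]
    exact le_trans hceil (le_of_eq (max_eq_right hcmp))


lemma refl_image_eq_preimage (c : ℝ) (S : Set ℝ) :
    (fun t : ℝ => c - t) '' S = (fun t : ℝ => c - t) ⁻¹' S := by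
  ext t
  constructor
  · rintro ⟨a, ha, rfl⟩; simpa [sub_sub_cancel] using ha
  · intro ht; exact ⟨c - t, ht, by ring⟩

lemma blocks_disjoint {n : ℕ} (hn : 0 < n) (i j : ℤ) (hij : i ≠ j) :
    Disjoint (Ioc (((i:ℝ)-1)/n) ((i:ℝ)/n)) (Ioc (((j:ℝ)-1)/n) ((j:ℝ)/n)) := by
  have hn' : (0:ℝ) < n := by exact_mod_cast hn
  rw [Set.Ioc_disjoint_Ioc]
  rcases lt_or_gt_of_ne hij with h | h
  · have hij' : (i:ℝ) ≤ (j:ℝ) - 1 := by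
      have h' : ((i + 1 : ℤ) : ℝ) ≤ ((j:ℤ):ℝ) := by exact_mod_cast Int.add_one_le_iff.mpr h
      push_cast at h'
      linarith
    calc min ((i:ℝ)/n) ((j:ℝ)/n) ≤ (i:ℝ)/n := min_le_left _ _
      _ ≤ ((j:ℝ)-1)/n := by gcongr
      _ ≤ max (((i:ℝ)-1)/n) (((j:ℝ)-1)/n) := le_max_right _ _
  · have hij' : (j:ℝ) ≤ (i:ℝ) - 1 := by
      have h' : ((j + 1 : ℤ) : ℝ) ≤ ((i:ℤ):ℝ) := by exact_mod_cast Int.add_one_le_iff.mpr h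
      push_cast at h'
      linarith
    calc min ((i:ℝ)/n) ((j:ℝ)/n) ≤ (j:ℝ)/n := min_le_right _ _
      _ ≤ ((i:ℝ)-1)/n := by gcongr
      _ ≤ max (((i:ℝ)-1)/n) (((j:ℝ)-1)/n) := le_max_left _ _

lemma msUnit_le_msdisc {r : ℕ} (hr : 0 < r) {n : ℕ} (hn : 0 < n) :
    msUnit r ≤ (MSdisc n r : ℝ) / n := by
  have hn' : (0:ℝ) < n := by exact_mod_cast hn
  rw [msUnit_eq]
  apply Real.sSup_le
  · intro ε hε
    have h1 : (⌈(n:ℝ)*ε⌉₊ : ℕ) ≤ MSdisc n r := le_msdisc hr (L1_mem hr hε hn)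
    have h2 : (n:ℝ) * ε ≤ (⌈(n:ℝ)*ε⌉₊ : ℝ) := Nat.le_ceil _
    rw [le_div_iff₀ hn']
    calc ε * n = n * ε := by ring
      _ ≤ (⌈(n:ℝ)*ε⌉₊ : ℝ) := h2
      _ ≤ (MSdisc n r : ℝ) := by exact_mod_cast h1
  · positivity

lemma step_approx {r : ℕ} (hr : 0 < r) {χ : ℝ → Fin r} (hχ : Measurable χ) {δ : ℝ} (hδ : 0 < δ) :
    ∃ N : ℕ, 0 < N ∧ ∀ n : ℕ, N ≤ n → ∃ d : ℤ → Fin r,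
      ∑ i ∈ Finset.Icc (1:ℤ) (n:ℤ),
        volume (Ioc (((i:ℝ)-1)/n) ((i:ℝ)/n) \ (χ ⁻¹' {d i} ∩ Icc 0 1)) < ENNReal.ofReal δ := by
  classical
  haveI hne : Nonempty (Fin r) := ⟨⟨0, hr⟩⟩
  set E : Fin r → Set ℝ := fun c => χ ⁻¹' {c} ∩ Icc 0 1 with hE
  have hEm : ∀ c, MeasurableSet (E c) :=
    fun c => (hχ (measurableSet_singleton c)).inter measurableSet_Icc
  have hEfin : ∀ c, volume (E c) ≠ ⊤ := by
    intro c
    have h1 : volume (E c) ≤ volume (Icc (0:ℝ) 1) := measure_mono Set.inter_subset_right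
    rw [Real.volume_Icc] at h1
    exact (lt_of_le_of_lt h1 (by norm_num)).ne
  set δ' : ℝ≥0∞ := ENNReal.ofReal (δ / (2 * ((r:ℝ)+1))) with hδ'
  have hδ'0 : δ' ≠ 0 := by
    rw [hδ']
    simp only [ne_eq, ENNReal.ofReal_eq_zero, not_le]
    positivity
  have hex : ∀ c : Fin r, ∃ K U : Set ℝ, K ⊆ E c ∧ E c ⊆ U ∧ IsCompact K ∧ IsOpen U ∧
      volume (U \ E c) < δ' ∧ volume (E c \ K) < δ' := by
    intro c
    obtain ⟨U, hUsub, hUopen, hUlt⟩ := (E c).exists_isOpen_lt_add (hEfin c) hδ'0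
    obtain ⟨K, hKsub, hKcomp, hKlt⟩ := (hEm c).exists_isCompact_lt_add (hEfin c) hδ'0
    have hKm : MeasurableSet K := hKcomp.measurableSet
    have hKfin : volume K ≠ ⊤ := ne_top_of_le_ne_top (hEfin c) (measure_mono hKsub)
    refine ⟨K, U, hKsub, hUsub, hKcomp, hUopen, ?_, ?_⟩
    · rw [measure_diff hUsub (hEm c).nullMeasurableSet (hEfin c),
        ENNReal.sub_lt_iff_lt_right (hEfin c) (measure_mono hUsub)]
      rwa [add_comm]
    · rw [measure_diff hKsub hKm.nullMeasurableSet hKfin,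
        ENNReal.sub_lt_iff_lt_right hKfin (measure_mono hKsub)]
      rwa [add_comm]
  choose K U hKsub hUsub hKcomp hUopen hUlt hKlt using hex
  have hηex : ∀ c : Fin r, ∃ η > 0, Metric.thickening η (K c) ⊆ U c :=
    fun c => (hKcomp c).exists_thickening_subset_open (hUopen c) ((hKsub c).trans (hUsub c))
  choose η hη0 hηsub using hηex
  set η0 : ℝ := Finset.univ.inf' Finset.univ_nonempty η with hη0def
  have hη0pos : 0 < η0 := by
    rw [hη0def, Finset.lt_inf'_iff]
    exact fun c _ => hη0 c
  refine ⟨⌈1/η0⌉₊ + 1, Nat.succ_pos _, ?_⟩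
  intro n hn
  have hn0 : 0 < n := lt_of_lt_of_le (Nat.succ_pos _) hn
  have hn' : (0:ℝ) < n := by exact_mod_cast hn0
  have hsmall : 1/(n:ℝ) < η0 := by
    have h1 : (1:ℝ)/η0 < ((⌈1/η0⌉₊ + 1 : ℕ) : ℝ) := by
      push_cast
      exact lt_of_le_of_lt (Nat.le_ceil _) (by linarith)
    have h2 : (1:ℝ)/η0 < n := lt_of_lt_of_le h1 (by exact_mod_cast hn)
    rw [div_lt_iff₀ hn']
    have h3 := (div_lt_iff₀ hη0pos).mp h2
    linarith
  set B : ℤ → Set ℝ := fun i => Ioc (((i:ℝ)-1)/n) ((i:ℝ)/n) with hB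
  set d : ℤ → Fin r := fun i => if h : ∃ c, (B i ∩ K c).Nonempty then h.choose else ⟨0, hr⟩ with hd
  refine ⟨d, ?_⟩
  set W : Set ℝ := (⋃ c, (U c \ E c)) ∪ (Icc 0 1 \ ⋃ c, K c) with hW
  have hWm : MeasurableSet W := by
    apply MeasurableSet.union
    · exact MeasurableSet.iUnion (fun c => (hUopen c).measurableSet.diff (hEm c))
    · exact measurableSet_Icc.diff (MeasurableSet.iUnion fun c => (hKcomp c).measurableSet)
  have hWvol : volume W < ENNReal.ofReal δ := by
    have hu1 : volume (⋃ c, (U c \ E c)) ≤ ∑ c : Fin r, volume (U c \ E c) := by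
      have : (⋃ c, (U c \ E c)) = ⋃ c ∈ Finset.univ, (U c \ E c) := by simp
      rw [this]
      exact measure_biUnion_finset_le _ _
    have hu2 : volume (Icc 0 1 \ ⋃ c, K c) ≤ ∑ c : Fin r, volume (E c \ K c) := by
      have hsub : (Icc 0 1 \ ⋃ c, K c : Set ℝ) ⊆ ⋃ c ∈ Finset.univ, (E c \ K c) := by
        rintro t ⟨ht01, htK⟩
        simp only [Set.mem_iUnion, not_exists] at htK
        simp only [Finset.mem_univ, Set.mem_iUnion, Set.iUnion_true]
        exact ⟨χ t, ⟨rfl, ht01⟩, htK _⟩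
      exact le_trans (measure_mono hsub) (measure_biUnion_finset_le _ _)
    have h1 : volume W ≤ (∑ c : Fin r, volume (U c \ E c)) + ∑ c : Fin r, volume (E c \ K c) := by
      rw [hW]
      exact le_trans (measure_union_le _ _) (add_le_add hu1 hu2)
    have hsum : ∀ g : Fin r → ℝ≥0∞, (∀ c, g c ≤ δ') → ∑ c : Fin r, g c ≤ (r : ℝ≥0∞) * δ' := by
      intro g hg
      calc ∑ c : Fin r, g c ≤ ∑ _c : Fin r, δ' := Finset.sum_le_sum (fun c _ => hg c)
        _ = (r : ℝ≥0∞) * δ' := by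
            rw [Finset.sum_const, Finset.card_univ, Fintype.card_fin, nsmul_eq_mul]
    have h2 : (∑ c : Fin r, volume (U c \ E c)) + ∑ c : Fin r, volume (E c \ K c)
        ≤ (r : ℝ≥0∞) * δ' + (r : ℝ≥0∞) * δ' :=
      add_le_add (hsum _ fun c => (hUlt c).le) (hsum _ fun c => (hKlt c).le)
    have h3 : (r : ℝ≥0∞) * δ' + (r : ℝ≥0∞) * δ' < ENNReal.ofReal δ := by
      rw [hδ', ← two_mul, ← mul_assoc]
      have hcast : (2 : ℝ≥0∞) * (r : ℝ≥0∞) = ((2*r : ℕ) : ℝ≥0∞) := by push_cast; ring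
      rw [hcast, ← ENNReal.ofReal_natCast (2*r), ← ENNReal.ofReal_mul (by positivity)]
      rw [ENNReal.ofReal_lt_ofReal_iff hδ]
      have hrpos : (0:ℝ) < 2*((r:ℝ)+1) := by positivity
      have h4 : ((2*r:ℕ):ℝ) / (2*((r:ℝ)+1)) < 1 := by
        rw [div_lt_one hrpos]; push_cast; linarith
      have h5 : (0:ℝ) ≤ ((2*r:ℕ):ℝ) / (2*((r:ℝ)+1)) := by positivity
      calc ((2*r:ℕ):ℝ) * (δ/(2*((r:ℝ)+1))) = δ * (((2*r:ℕ):ℝ)/(2*((r:ℝ)+1))) := by ring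
        _ < δ * 1 := by
            apply mul_lt_mul_of_pos_left h4 hδ
        _ = δ := mul_one δ
    exact lt_of_le_of_lt h1 (lt_of_le_of_lt h2 h3)
  have hkey : ∀ i ∈ Finset.Icc (1:ℤ) (n:ℤ), B i \ (χ ⁻¹' {d i} ∩ Icc 0 1) ⊆ B i ∩ W := by
    intro i hi
    rw [Finset.mem_Icc] at hi
    have hBsub01 : B i ⊆ Icc 0 1 := by
      rw [hB]
      rintro t ⟨ht1, ht2⟩
      have hi1 : (1:ℝ) ≤ (i:ℝ) := by exact_mod_cast hi.1
      have hi2 : (i:ℝ) ≤ (n:ℝ) := by exact_mod_cast hi.2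
      constructor
      · have h0 : (0:ℝ) ≤ ((i:ℝ)-1)/n := div_nonneg (by linarith) hn'.le
        linarith
      · have h1 : (i:ℝ)/n ≤ 1 := by rw [div_le_one hn']; linarith
        linarith
    by_cases hcl : ∃ c, (B i ∩ K c).Nonempty
    · have hc'spec : (B i ∩ K (d i)).Nonempty := by
        rw [hd]
        simp only
        rw [dif_pos hcl]
        exact hcl.choose_spec
      obtain ⟨t0, ht0B, ht0K⟩ := hc'spec
      have hBU : B i ⊆ U (d i) := by
        intro t htB
        apply hηsub (d i)
        rw [Metric.mem_thickening_iff]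
        refine ⟨t0, ht0K, ?_⟩
        rw [Real.dist_eq]
        have h1 := htB.1
        have h2 := htB.2
        have h3 := ht0B.1
        have h4 := ht0B.2
        have habs : |t - t0| ≤ 1/(n:ℝ) := by
          rw [abs_le]
          constructor
          · have : ((i:ℝ)-1)/n - (i:ℝ)/n = -(1/n) := by ring
            nlinarith [h1, h4]
          · have : (i:ℝ)/n - ((i:ℝ)-1)/n = 1/n := by ring
            nlinarith [h2, h3]
        calc |t - t0| ≤ 1/(n:ℝ) := habs
          _ < η0 := hsmall
          _ ≤ η (d i) := Finset.inf'_le _ (Finset.mem_univ (d i))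
      rintro t ⟨htB, htE⟩
      refine ⟨htB, Or.inl ?_⟩
      simp only [Set.mem_iUnion]
      exact ⟨d i, hBU htB, htE⟩
    · push_neg at hcl
      rintro t ⟨htB, _⟩
      refine ⟨htB, Or.inr ⟨hBsub01 htB, ?_⟩⟩
      simp only [Set.mem_iUnion, not_exists]
      intro c htK
      have h0 : t ∈ B i ∩ K c := ⟨htB, htK⟩
      rw [hcl c] at h0
      exact h0
  calc ∑ i ∈ Finset.Icc (1:ℤ) (n:ℤ), volume (B i \ (χ ⁻¹' {d i} ∩ Icc 0 1))
      ≤ ∑ i ∈ Finset.Icc (1:ℤ) (n:ℤ), volume (B i ∩ W) :=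
        Finset.sum_le_sum (fun i hi => measure_mono (hkey i hi))
    _ = volume (⋃ i ∈ Finset.Icc (1:ℤ) (n:ℤ), B i ∩ W) := by
        rw [measure_biUnion_finset ?_ (fun i _ => measurableSet_Ioc.inter hWm)]
        intro i _ j _ hij
        exact (blocks_disjoint hn0 i j hij).mono inter_subset_left inter_subset_left
    _ ≤ volume W := measure_mono (by
        simp only [Set.iUnion_subset_iff]
        exact fun i _ => inter_subset_right)
    _ < ENNReal.ofReal δ := hWvol

lemma msdisc_le_msUnit {r : ℕ} (hr : 0 < r) {δ : ℝ} (hδ : 0 < δ) :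
    ∃ N : ℕ, 0 < N ∧ ∀ n : ℕ, N ≤ n → (MSdisc n r : ℝ) / n ≤ msUnit r + δ := by
  classical
  set ε : ℝ := msUnit r + δ/2 with hεdef
  have hεpos : 0 < ε := by
    have := msUnit_nonneg r
    rw [hεdef]
    linarith
  have hεnot : ε ∉ msSet r := by
    intro hmem
    have h := le_csSup (bddAbove_msSet hr) hmem
    rw [← msUnit_eq] at h
    rw [hεdef] at h
    linarith
  have hbad : ∃ χ : ℝ → Fin r, Measurable χ ∧ ∀ A : Set ℝ, MeasurableSet A → A ⊆ Set.Icc 0 1 →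
      (∃ c, ∀ a ∈ A, χ a = c) → (∃ x : ℝ, A = (fun a => 2*x - a) '' A) →
      volume A < ENNReal.ofReal ε := by
    by_contra hcon
    push_neg at hcon
    refine hεnot ⟨hεpos, ?_⟩
    intro χ hχ
    obtain ⟨A, h1, h2, h3, h4, h5⟩ := hcon χ hχ
    exact ⟨A, h1, h2, h3, h4, h5⟩
  obtain ⟨χ, hχm, hχbad⟩ := hbad
  have hδ4 : 0 < δ/4 := by linarith
  obtain ⟨N, hN0, hN⟩ := step_approx hr hχm hδ4
  refine ⟨N, hN0, ?_⟩
  intro n hn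
  have hn0 : 0 < n := lt_of_lt_of_le hN0 hn
  have hn' : (0:ℝ) < n := by exact_mod_cast hn0
  obtain ⟨d, hd⟩ := hN n hn
  obtain ⟨D, hDsub, ⟨c₀, hc₀⟩, ⟨s, hs⟩, hDcard⟩ := msdisc_mem hr n d
  have hDfin : D.Finite := (Set.finite_Icc _ _).subset hDsub
  set Df : Finset ℤ := hDfin.toFinset with hDf
  set B : ℤ → Set ℝ := fun i => Ioc (((i:ℝ)-1)/n) ((i:ℝ)/n) with hB
  set E : Set ℝ := χ ⁻¹' {c₀} ∩ Icc 0 1 with hE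
  have hEm : MeasurableSet E := (hχm (measurableSet_singleton _)).inter measurableSet_Icc
  set U : Set ℝ := ⋃ i ∈ Df, B i with hU
  have hUm : MeasurableSet U := Df.measurableSet_biUnion (fun i _ => measurableSet_Ioc)
  have hDfIcc : ∀ i ∈ Df, 1 ≤ i ∧ i ≤ (n:ℤ) := by
    intro i hi
    exact Set.mem_Icc.mp (hDsub (hDfin.mem_toFinset.mp hi))
  have hBsub : ∀ i ∈ Df, B i ⊆ Icc 0 1 := by
    intro i hi
    rintro t ⟨ht1, ht2⟩
    obtain ⟨hi1, hi2⟩ := hDfIcc i hi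
    have hi1' : (1:ℝ) ≤ (i:ℝ) := by exact_mod_cast hi1
    have hi2' : (i:ℝ) ≤ (n:ℝ) := by exact_mod_cast hi2
    constructor
    · have h0 : (0:ℝ) ≤ ((i:ℝ)-1)/n := div_nonneg (by linarith) hn'.le
      linarith
    · have h1 : (i:ℝ)/n ≤ 1 := by rw [div_le_one hn']; linarith
      linarith
  have hUsub : U ⊆ Icc 0 1 := by
    rw [hU]
    exact Set.iUnion₂_subset hBsub
  have hUfin : volume U ≠ ⊤ := by
    have h1 : volume U ≤ volume (Icc (0:ℝ) 1) := measure_mono hUsub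
    rw [Real.volume_Icc] at h1
    exact (lt_of_le_of_lt h1 (by norm_num)).ne
  have hdisj : (↑Df : Set ℤ).PairwiseDisjoint B := by
    intro i _ j _ hij
    exact blocks_disjoint hn0 i j hij
  have hUvol : volume U = (Df.card : ℝ≥0∞) * ENNReal.ofReal (1/n) := by
    rw [hU, measure_biUnion_finset hdisj (fun i _ => measurableSet_Ioc)]
    have hv : ∀ i ∈ Df, volume (B i) = ENNReal.ofReal (1/(n:ℝ)) := by
      intro i _
      rw [hB]
      simp only
      rw [Real.volume_Ioc]
      congr 1
      ring
    rw [Finset.sum_congr rfl hv, Finset.sum_const, nsmul_eq_mul]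
  have herr : volume (U \ E) < ENNReal.ofReal (δ/4) := by
    have h1 : U \ E ⊆ ⋃ i ∈ Df, (B i \ E) := by
      rw [hU]
      rintro t ⟨htU, htE⟩
      simp only [Set.mem_iUnion] at htU ⊢
      obtain ⟨i, hi, hti⟩ := htU
      exact ⟨i, hi, hti, htE⟩
    have h2 : volume (U \ E) ≤ ∑ i ∈ Df, volume (B i \ E) :=
      le_trans (measure_mono h1) (measure_biUnion_finset_le _ _)
    have h3 : ∀ i ∈ Df, volume (B i \ E) = volume (B i \ (χ ⁻¹' {d i} ∩ Icc 0 1)) := by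
      intro i hi
      have hdi : d i = c₀ := hc₀ i (hDfin.mem_toFinset.mp hi)
      rw [hE, hdi]
    have h4 : Df ⊆ Finset.Icc (1:ℤ) (n:ℤ) := by
      intro i hi
      rw [Finset.mem_Icc]
      exact hDfIcc i hi
    calc volume (U \ E) ≤ ∑ i ∈ Df, volume (B i \ E) := h2
      _ = ∑ i ∈ Df, volume (B i \ (χ ⁻¹' {d i} ∩ Icc 0 1)) := Finset.sum_congr rfl h3
      _ ≤ ∑ i ∈ Finset.Icc (1:ℤ) (n:ℤ), volume (B i \ (χ ⁻¹' {d i} ∩ Icc 0 1)) :=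
          Finset.sum_le_sum_of_subset h4
      _ < ENNReal.ofReal (δ/4) := hd
  set σ' : ℝ := ((s:ℝ)-1)/n with hσ'
  set S : Set ℝ := U ∩ E with hSdef
  have hSm : MeasurableSet S := hUm.inter hEm
  have hρSm : MeasurableSet ((fun t : ℝ => σ' - t) '' S) := by
    rw [refl_image_eq_preimage]
    exact hSm.preimage (measurable_const.sub measurable_id)
  set Aset : Set ℝ := S ∩ ((fun t : ℝ => σ' - t) '' S) with hAdef
  have hAm : MeasurableSet Aset := hSm.inter hρSm
  have hsD : ∀ i, i ∈ D → s - i ∈ D := by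
    intro i hi
    rw [hs]
    exact ⟨i, hi, rfl⟩
  have hρB : ∀ i : ℤ, (fun t : ℝ => σ' - t) '' B i
      = Ico ((((s - i : ℤ):ℝ)-1)/n) (((s - i : ℤ):ℝ)/n) := by
    intro i
    have e1 : σ' - ((i:ℝ)/n) = (((s - i : ℤ):ℝ)-1)/n := by
      rw [hσ']; push_cast; ring
    have e2 : σ' - (((i:ℝ)-1)/n) = ((s - i : ℤ):ℝ)/n := by
      rw [hσ']; push_cast; ring
    rw [hB]
    simp only
    rw [Set.image_const_sub_Ioc, e1, e2]
  set P : Set ℝ := ⋃ i ∈ Df, ({(((s - i : ℤ):ℝ)-1)/n} : Set ℝ) with hP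
  have hρUsub : (fun t : ℝ => σ' - t) '' U ⊆ U ∪ P := by
    rw [hU, Set.image_iUnion₂]
    intro t ht
    simp only [Set.mem_iUnion] at ht
    obtain ⟨i, hi, hti⟩ := ht
    rw [hρB i] at hti
    have hjD : s - i ∈ Df := hDfin.mem_toFinset.mpr (hsD i (hDfin.mem_toFinset.mp hi))
    rcases eq_or_lt_of_le hti.1 with heq | hlt
    · right
      exact Set.mem_biUnion hi (Set.mem_singleton_iff.mpr heq.symm)
    · left
      exact Set.mem_biUnion hjD (⟨hlt, hti.2.le⟩ : t ∈ B (s - i))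
  have hPnull : volume P = 0 := by
    rw [hP]
    refine le_antisymm (le_trans (measure_biUnion_finset_le _ _) ?_) (zero_le)
    apply le_of_eq
    apply Finset.sum_eq_zero
    intro i _
    exact Real.volume_singleton
  have hSUvol : volume (S ∪ (fun t : ℝ => σ' - t) '' S) ≤ volume U := by
    have hsub : S ∪ (fun t : ℝ => σ' - t) '' S ⊆ U ∪ P := by
      apply Set.union_subset
      · exact fun t ht => Or.inl ht.1
      · exact le_trans (Set.image_mono Set.inter_subset_left) hρUsub
    refine le_trans (measure_mono hsub) ?_
    refine le_trans (measure_union_le _ _) ?_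
    rw [hPnull, add_zero]
  have hρSvol : volume ((fun t : ℝ => σ' - t) '' S) = volume S := vol_image_refl _ hSm
  have hMvol : volume (S ∪ (fun t : ℝ => σ' - t) '' S) + volume Aset = volume S + volume S := by
    rw [hAdef]
    rw [measure_union_add_inter S hρSm, hρSvol]
  have hAsub01 : Aset ⊆ Icc 0 1 := fun t ht => hUsub ht.1.1
  have hAmono : ∀ a ∈ Aset, χ a = c₀ := fun a ha => ha.1.2.1
  have hAsym : ∃ x : ℝ, Aset = (fun a : ℝ => 2*x - a) '' Aset := by
    refine ⟨σ'/2, ?_⟩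
    have h2x : (fun a : ℝ => 2*(σ'/2) - a) = (fun a : ℝ => σ' - a) := by
      funext a
      ring_nf
    rw [h2x, hAdef]
    exact refl_inter_image_symm σ' S
  have hAlt : volume Aset < ENNReal.ofReal ε := hχbad Aset hAm hAsub01 ⟨c₀, hAmono⟩ hAsym
  have hcomb : volume U < ENNReal.ofReal (ε + δ/2) := by
    have hUS : volume U ≤ volume S + volume (U \ E) := by
      refine le_trans (measure_mono ?_) (measure_union_le _ _)
      intro t ht
      by_cases htE : t ∈ E
      · exact Or.inl ⟨ht, htE⟩
      · exact Or.inr ⟨ht, htE⟩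
    have h1 : volume U + volume U ≤ (volume S + volume S) + (volume (U\E) + volume (U\E)) := by
      calc volume U + volume U
          ≤ (volume S + volume (U\E)) + (volume S + volume (U\E)) := add_le_add hUS hUS
        _ = (volume S + volume S) + (volume (U\E) + volume (U\E)) := by ring
    have h2 : volume S + volume S ≤ volume U + volume Aset := by
      rw [← hMvol]
      exact add_le_add_left hSUvol _
    have h3 : volume U + volume U
        ≤ volume U + (volume Aset + (volume (U\E) + volume (U\E))) := by
      calc volume U + volume U
          ≤ (volume U + volume Aset) + (volume (U\E) + volume (U\E)) :=
            le_trans h1 (add_le_add_left h2 _)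
        _ = volume U + (volume Aset + (volume (U\E) + volume (U\E))) := by ring
    have h5 : volume U ≤ volume Aset + (volume (U\E) + volume (U\E)) :=
      (ENNReal.add_le_add_iff_left hUfin).mp h3
    have h6 : volume Aset + (volume (U\E) + volume (U\E))
        < ENNReal.ofReal ε + (ENNReal.ofReal (δ/4) + ENNReal.ofReal (δ/4)) :=
      ENNReal.add_lt_add hAlt (ENNReal.add_lt_add herr herr)
    have h7 : ENNReal.ofReal ε + (ENNReal.ofReal (δ/4) + ENNReal.ofReal (δ/4))
        = ENNReal.ofReal (ε + δ/2) := by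
      rw [← ENNReal.ofReal_add (by positivity) (by positivity),
        ← ENNReal.ofReal_add hεpos.le (by positivity)]
      congr 1
      ring
    exact lt_of_le_of_lt h5 (h7 ▸ h6)
  have hcard : (Df.card : ℝ)/n < ε + δ/2 := by
    have h8 : volume U = ENNReal.ofReal ((Df.card : ℝ)/n) := by
      rw [hUvol, ← ENNReal.ofReal_natCast Df.card, ← ENNReal.ofReal_mul (Nat.cast_nonneg _)]
      congr 1
      ring
    rw [h8] at hcomb
    exact (ENNReal.ofReal_lt_ofReal_iff_of_nonneg (div_nonneg (Nat.cast_nonneg _) (Nat.cast_nonneg _))).mp hcomb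
  have hfinal : (MSdisc n r : ℝ)/n ≤ (Df.card:ℝ)/n := by
    have hle : (MSdisc n r : ℝ) ≤ (Df.card : ℝ) := by
      exact_mod_cast le_trans hDcard (le_of_eq (Set.ncard_eq_toFinset_card D hDfin))
    gcongr
  calc (MSdisc n r:ℝ)/n ≤ (Df.card:ℝ)/n := hfinal
    _ ≤ ε + δ/2 := hcard.le
    _ = msUnit r + δ := by rw [hεdef]; ring

end Stmt18

open Stmt18 in
/-- ms([n], r) converges to ms([0,1], r), which is also its infimum over n. -/
theorem stmt_18 (r : ℕ) (hr : 0 < r) :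
    Tendsto (fun n : ℕ => (MSdisc (n + 1) r : ℝ) / (n + 1)) atTop (nhds (msUnit r)) ∧
      (⨅ n : ℕ, (MSdisc (n + 1) r : ℝ) / (n + 1)) = msUnit r := by
  classical
  have hlow : ∀ n : ℕ, msUnit r ≤ (MSdisc (n+1) r : ℝ) / ((n:ℝ)+1) := by
    intro n
    have h := msUnit_le_msdisc hr (Nat.succ_pos n)
    rwa [Nat.cast_succ] at h
  have hupper : ∀ δ : ℝ, 0 < δ →
      ∃ N : ℕ, ∀ n : ℕ, N ≤ n → (MSdisc (n+1) r : ℝ)/((n:ℝ)+1) ≤ msUnit r + δ := by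
    intro δ hδ
    obtain ⟨N, hN0, hN⟩ := msdisc_le_msUnit hr hδ
    refine ⟨N, fun n hn => ?_⟩
    have h := hN (n+1) (le_trans hn (Nat.le_succ n))
    rwa [Nat.cast_succ] at h
  constructor
  · rw [Metric.tendsto_atTop]
    intro ξ hξ
    obtain ⟨N, hN⟩ := hupper (ξ/2) (by linarith)
    refine ⟨N, fun n hn => ?_⟩
    have h1 := hlow n
    have h2 := hN n hn
    rw [Real.dist_eq, abs_of_nonneg (by linarith)]
    linarith
  · apply le_antisymm
    · apply le_of_forall_pos_le_add
      intro ξ hξ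
      obtain ⟨N, hN⟩ := hupper ξ hξ
      have hbdd : BddBelow (Set.range (fun n : ℕ => (MSdisc (n+1) r : ℝ)/((n:ℝ)+1))) := by
        refine ⟨0, ?_⟩
        rintro y ⟨n, rfl⟩
        positivity
      exact le_trans (ciInf_le hbdd N) (hN N le_rfl)
    · exact le_ciInf hlow
end
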